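/- Let B̂ be the quotient of the complete metric space (B, d_bottle) of q-tame barcodes by the action of ℝ by overall shifts, equipped with the induced (Hausdorff) quotient distance δ. Then B̂ is a complete metric space. -/

import Mathlib

open scoped Classical
noncomputable section

/-- A bar: a pair `(a, b)` representing the interval `(a, b]` (with `b = ⊤` for `(a, ∞)`). -/
abbrev Bar : Type := ℝ × EReal

namespace Bar

/-- The interval `(a,b]` is nonempty. -/
def IsValid (I : Bar) : Prop := (I.1 : EReal) < I.2

/-- The length of a bar. -/
def len (I : Bar) : EReal := I.2 - (I.1 : EReal)

/-- A bar is semi-infinite if its right endpoint is `+∞`. -/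
def IsInf (I : Bar) : Prop := I.2 = ⊤

end Bar

/-- `I ⊆ J^{-δ}`, where `(a,b]^{-δ} = (a-δ, b+δ]`. -/
def barSub (I J : Bar) (δ : ℝ) : Prop :=
  J.1 - δ ≤ I.1 ∧ I.2 ≤ J.2 + (δ : EReal)

/-- A barcode: a multiset of nonempty intervals of the form `(a,b]` or `(a,∞)`,
recorded by its multiplicity function. -/
structure Barcode where
  mult : Bar → ℕ
  valid : ∀ I, mult I ≠ 0 → I.IsValid

namespace Barcode

/-- `m` is a `δ`-matching between the barcodes `B` and `B'`: it matches `m I J` copies of the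
bar `I` of `B` with copies of the bar `J` of `B'`; matched bars must be `δ`-close, and
unmatched (deleted) bars must have length at most `2δ`. -/
def IsMatching (B B' : Barcode) (δ : ℝ) (m : Bar → Bar → ℕ) : Prop :=
  (∀ I, {J | m I J ≠ 0}.Finite) ∧
  (∀ J, {I | m I J ≠ 0}.Finite) ∧
  (∀ I, ∑ᶠ J, m I J ≤ B.mult I) ∧
  (∀ J, ∑ᶠ I, m I J ≤ B'.mult J) ∧
  (∀ I, ∑ᶠ J, m I J < B.mult I → I.len ≤ ((2 * δ : ℝ) : EReal)) ∧
  (∀ J, ∑ᶠ I, m I J < B'.mult J → J.len ≤ ((2 * δ : ℝ) : EReal)) ∧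
  (∀ I J, m I J ≠ 0 → barSub I J δ ∧ barSub J I δ)

/-- `B` and `B'` admit a `δ`-matching. -/
def HasMatching (B B' : Barcode) (δ : ℝ) : Prop := ∃ m, IsMatching B B' δ m

/-- The bottleneck distance between two barcodes. -/
def bottleneck (B B' : Barcode) : EReal :=
  sInf {x : EReal | ∃ δ : ℝ, 0 ≤ δ ∧ x = (δ : EReal) ∧ HasMatching B B' δ}

/-- A barcode is finite if it has finitely many bars counted with multiplicity. -/
def IsFinite (B : Barcode) : Prop := {I | B.mult I ≠ 0}.Finite

/-- A barcode is q-tame if for every `ε > 0` it has finitely many bars of length `≥ ε`. -/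
def QTame (B : Barcode) : Prop :=
  ∀ ε : ℝ, 0 < ε → {I | B.mult I ≠ 0 ∧ (ε : EReal) ≤ I.len}.Finite

end Barcode

/-- The barcode `B[c]`, obtained from `B` by shifting all bars by `c`. -/
def Barcode.shift (B : Barcode) (c : ℝ) : Barcode where
  mult I := B.mult (I.1 - c, I.2 - (c : EReal))
  valid I h := by
    have hv := B.valid _ h
    rcases I with ⟨x, y⟩
    simp only [Bar.IsValid] at hv ⊢
    induction y using EReal.rec with
    | bot => simp [EReal.bot_sub] at hv
    | coe r =>
        rw [show ((r : EReal) - (c : EReal)) = ((r - c : ℝ) : EReal) by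
          rw [EReal.coe_sub]] at hv
        have : x - c < r - c := by exact_mod_cast hv
        exact_mod_cast (by linarith : x < r)
    | top => exact EReal.coe_lt_top x

/-- The distance between orbits of the shift action: the quotient (Hausdorff) distance on
barcodes up to overall shift. -/
def Barcode.qdist (B B' : Barcode) : EReal :=
  sInf {x : EReal | ∃ c : ℝ, x = Barcode.bottleneck B (B'.shift c)}

/-! ### Part 0: generalities -/

section Part0

lemma Barcode.ext' {B B' : Barcode} (h : ∀ I, B.mult I = B'.mult I) : B = B' := by
  cases B; cases B'
  simp only [Barcode.mk.injEq]
  exact funext h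

lemma EReal.eq_top_of_add_real_eq_top {x : EReal} {c : ℝ} (h : x + (c : EReal) = ⊤) :
    x = ⊤ := by
  induction x using EReal.rec with
  | bot => simp at h
  | coe r => rw [← EReal.coe_add] at h; exact absurd h (EReal.coe_ne_top _)
  | top => rfl

lemma EReal.sub_real_sub_real (y : EReal) (a b : ℝ) :
    y - (a : EReal) - (b : EReal) = y - ((a + b : ℝ) : EReal) := by
  induction y using EReal.rec with
  | bot => rw [EReal.bot_sub, EReal.bot_sub, EReal.bot_sub]
  | coe r =>
      rw [← EReal.coe_sub, ← EReal.coe_sub, ← EReal.coe_sub, EReal.coe_eq_coe_iff]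
      ring
  | top => rw [EReal.top_sub_coe, EReal.top_sub_coe, EReal.top_sub_coe]

lemma EReal.add_real_add_real (y : EReal) (a b : ℝ) :
    y + (a : EReal) + (b : EReal) = y + ((a + b : ℝ) : EReal) := by
  rw [add_assoc, ← EReal.coe_add]

lemma EReal.sub_real_le_sub_real_iff {x y : EReal} (c : ℝ) :
    x - (c : EReal) ≤ y - (c : EReal) ↔ x ≤ y := by
  constructor
  · intro h
    have := add_le_add_left h (c : EReal)
    rwa [EReal.sub_add_cancel, EReal.sub_add_cancel] at this
  · intro h
    exact EReal.sub_le_sub h le_rfl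

/-- The "unshift" of a bar: subtract `c` from both endpoints. -/
def unshiftBar (I : Bar) (c : ℝ) : Bar := (I.1 - c, I.2 - (c : EReal))

lemma unshiftBar_unshiftBar (I : Bar) (a b : ℝ) :
    unshiftBar (unshiftBar I b) a = unshiftBar I (a + b) := by
  unfold unshiftBar
  simp only [Prod.mk.injEq]
  refine ⟨by ring, ?_⟩
  rw [EReal.sub_real_sub_real, add_comm a b]

lemma unshiftBar_zero (I : Bar) : unshiftBar I 0 = I := by
  unfold unshiftBar
  simp

/-- Unshifting as an equivalence of `Bar`. -/
def unshiftEquiv (c : ℝ) : Bar ≃ Bar where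
  toFun I := unshiftBar I c
  invFun I := unshiftBar I (-c)
  left_inv I := by
    show unshiftBar (unshiftBar I c) (-c) = I
    rw [unshiftBar_unshiftBar]
    simp [unshiftBar_zero]
  right_inv I := by
    show unshiftBar (unshiftBar I (-c)) c = I
    rw [unshiftBar_unshiftBar]
    simp [unshiftBar_zero]

lemma len_unshiftBar (I : Bar) (c : ℝ) : (unshiftBar I c).len = I.len := by
  rcases I with ⟨x, y⟩
  show y - (c : EReal) - ((x - c : ℝ) : EReal) = y - (x : EReal)
  induction y using EReal.rec with
  | bot => rw [EReal.bot_sub, EReal.bot_sub, EReal.bot_sub]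
  | coe r =>
      rw [← EReal.coe_sub, ← EReal.coe_sub, ← EReal.coe_sub, EReal.coe_eq_coe_iff]
      ring
  | top => rw [EReal.top_sub_coe, EReal.top_sub_coe, EReal.top_sub_coe]

lemma Barcode.shift_mult (B : Barcode) (c : ℝ) (I : Bar) :
    (B.shift c).mult I = B.mult (unshiftBar I c) := rfl

lemma Barcode.shift_shift (B : Barcode) (a b : ℝ) :
    (B.shift a).shift b = B.shift (a + b) := by
  apply Barcode.ext'
  intro I
  rw [Barcode.shift_mult, Barcode.shift_mult, Barcode.shift_mult,
    unshiftBar_unshiftBar, add_comm a b]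

lemma Barcode.shift_zero (B : Barcode) : B.shift 0 = B := by
  apply Barcode.ext'
  intro I
  rw [Barcode.shift_mult, unshiftBar_zero]

lemma Barcode.QTame.shift {B : Barcode} (hB : B.QTame) (c : ℝ) : (B.shift c).QTame := by
  intro ε hε
  have h : {I | (B.shift c).mult I ≠ 0 ∧ (ε : EReal) ≤ I.len}
      = (fun I => unshiftBar I c) ⁻¹' {I | B.mult I ≠ 0 ∧ (ε : EReal) ≤ I.len} := by
    ext I
    simp only [Set.mem_setOf_eq, Set.mem_preimage, Barcode.shift_mult, len_unshiftBar]
  rw [h]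
  exact Set.Finite.preimage ((unshiftEquiv c).injective.injOn) (hB ε hε)

/-! ### barSub lemmas -/

lemma barSub_refl (I : Bar) : barSub I I 0 := by
  constructor
  · simp
  · simp

lemma barSub.mono {I J : Bar} {δ δ' : ℝ} (h : barSub I J δ) (hle : δ ≤ δ') :
    barSub I J δ' := by
  refine ⟨by linarith [h.1], h.2.trans (add_le_add_right (EReal.coe_le_coe_iff.2 hle) _)⟩

lemma barSub.trans {I J K : Bar} {δ₁ δ₂ : ℝ} (h₁ : barSub I J δ₁) (h₂ : barSub J K δ₂) :
    barSub I K (δ₁ + δ₂) := by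
  constructor
  · have := h₁.1; have := h₂.1; linarith
  · calc I.2 ≤ J.2 + (δ₁ : EReal) := h₁.2
    _ ≤ (K.2 + (δ₂ : EReal)) + (δ₁ : EReal) := add_le_add_left h₂.2 _
    _ = K.2 + ((δ₁ + δ₂ : ℝ) : EReal) := by
        rw [EReal.add_real_add_real, add_comm δ₂ δ₁]

lemma barSub.top_of_top {I J : Bar} {δ : ℝ} (h : barSub I J δ) (hI : I.2 = ⊤) :
    J.2 = ⊤ := by
  have := h.2
  rw [hI] at this
  exact EReal.eq_top_of_add_real_eq_top (top_le_iff.1 this)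

lemma barSub.right_real {I J : Bar} {δ : ℝ} {r s : ℝ} (h : barSub I J δ)
    (hI : I.2 = (r : EReal)) (hJ : J.2 = (s : EReal)) : r ≤ s + δ := by
  have := h.2
  rw [hI, hJ, ← EReal.coe_add] at this
  exact_mod_cast this

/-- Length comparison for close bars. -/
lemma len_le_of_close {I J : Bar} {δ : ℝ} (h₁ : barSub I J δ) (h₂ : barSub J I δ) :
    I.len ≤ J.len + ((2 * δ : ℝ) : EReal) := by
  by_cases hJt : J.2 = ⊤
  · have hlen : J.len = ⊤ := by unfold Bar.len; rw [hJt]; exact EReal.top_sub_coe _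
    rw [hlen, EReal.top_add_coe]
    exact le_top
  · have hIt : I.2 ≠ ⊤ := fun hI => hJt (h₁.top_of_top hI)
    by_cases hIb : I.2 = ⊥
    · have : I.len = ⊥ := by unfold Bar.len; rw [hIb]; exact EReal.bot_sub _
      rw [this]; exact bot_le
    · by_cases hJb : J.2 = ⊥
      · exfalso
        have := h₁.2
        rw [hJb, EReal.bot_add] at this
        exact hIb (le_bot_iff.1 this)
      · obtain ⟨r, hr⟩ : ∃ r : ℝ, I.2 = (r : EReal) :=
          ⟨I.2.toReal, (EReal.coe_toReal hIt hIb).symm⟩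
        obtain ⟨s, hs⟩ : ∃ s : ℝ, J.2 = (s : EReal) :=
          ⟨J.2.toReal, (EReal.coe_toReal hJt hJb).symm⟩
        have h1 : r ≤ s + δ := h₁.right_real hr hs
        have h2 : J.1 - δ ≤ I.1 := h₁.1
        unfold Bar.len
        rw [hr, hs, ← EReal.coe_sub, ← EReal.coe_sub, ← EReal.coe_add,
          EReal.coe_le_coe_iff]
        linarith

/-- Deleted-bar bound: bars close to a short bar are short. -/
lemma len_le_two_mul_of_close {I J : Bar} {δ₁ δ₂ : ℝ} (h₁ : barSub I J δ₁) (h₂ : barSub J I δ₁)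
    (hJ : J.len ≤ ((2 * δ₂ : ℝ) : EReal)) : I.len ≤ ((2 * (δ₁ + δ₂) : ℝ) : EReal) := by
  calc I.len ≤ J.len + ((2 * δ₁ : ℝ) : EReal) := len_le_of_close h₁ h₂
  _ ≤ ((2 * δ₂ : ℝ) : EReal) + ((2 * δ₁ : ℝ) : EReal) := add_le_add_left hJ _
  _ = ((2 * (δ₁ + δ₂) : ℝ) : EReal) := by
      rw [← EReal.coe_add, EReal.coe_eq_coe_iff]; ring

lemma unshiftBar_barSub {I J : Bar} {δ : ℝ} (c : ℝ) (h : barSub I J δ) :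
    barSub (unshiftBar I c) (unshiftBar J c) δ := by
  constructor
  · have := h.1
    show J.1 - c - δ ≤ I.1 - c
    linarith
  · show I.2 - (c : EReal) ≤ J.2 - (c : EReal) + (δ : EReal)
    have heq : J.2 - (c : EReal) + (δ : EReal) = J.2 + (δ : EReal) - (c : EReal) := by
      rw [sub_eq_add_neg, sub_eq_add_neg, add_assoc, add_assoc]
      congr 1
      rw [add_comm]
    rw [heq, EReal.sub_real_le_sub_real_iff]
    exact h.2

end Part0
/-! ### Part 2: matching lemmas, bottleneck and qdist interface, counting helpers -/

section Part2

namespace Barcode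

lemma IsMatching.mono {B B' : Barcode} {δ δ' : ℝ} {m : Bar → Bar → ℕ}
    (h : IsMatching B B' δ m) (hle : δ ≤ δ') : IsMatching B B' δ' m := by
  obtain ⟨f1, f2, s1, s2, d1, d2, cl⟩ := h
  have h2 : ((2 * δ : ℝ) : EReal) ≤ ((2 * δ' : ℝ) : EReal) :=
    EReal.coe_le_coe_iff.2 (by linarith)
  exact ⟨f1, f2, s1, s2, fun I hI => (d1 I hI).trans h2, fun J hJ => (d2 J hJ).trans h2,
    fun I J hm => ⟨((cl I J hm).1).mono hle, ((cl I J hm).2).mono hle⟩⟩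

lemma HasMatching.mono {B B' : Barcode} {δ δ' : ℝ}
    (h : HasMatching B B' δ) (hle : δ ≤ δ') : HasMatching B B' δ' :=
  let ⟨m, hm⟩ := h
  ⟨m, hm.mono hle⟩

lemma IsMatching.shift {B B' : Barcode} {δ : ℝ} {m : Bar → Bar → ℕ} (c : ℝ)
    (h : IsMatching B B' δ m) :
    IsMatching (B.shift c) (B'.shift c) δ
      (fun I J => m (unshiftBar I c) (unshiftBar J c)) := by
  obtain ⟨f1, f2, s1, s2, d1, d2, cl⟩ := h
  have hfun : ∀ I : Bar, unshiftBar I c = unshiftEquiv c I := fun _ => rfl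
  have hsum1 : ∀ I, ∑ᶠ J, m (unshiftBar I c) (unshiftBar J c) = ∑ᶠ J, m (unshiftBar I c) J := by
    intro I
    exact finsum_comp_equiv (unshiftEquiv c) (f := fun J => m (unshiftBar I c) J)
  have hsum2 : ∀ J, ∑ᶠ I, m (unshiftBar I c) (unshiftBar J c) = ∑ᶠ I, m I (unshiftBar J c) := by
    intro J
    exact finsum_comp_equiv (unshiftEquiv c) (f := fun I => m I (unshiftBar J c))
  have hback : ∀ I J : Bar, barSub (unshiftBar I c) (unshiftBar J c) δ → barSub I J δ := by
    intro I J hb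
    have := unshiftBar_barSub (-c) hb
    rwa [unshiftBar_unshiftBar, unshiftBar_unshiftBar, neg_add_cancel,
      unshiftBar_zero, unshiftBar_zero] at this
  refine ⟨?_, ?_, ?_, ?_, ?_, ?_, ?_⟩
  · intro I
    have : {J | m (unshiftBar I c) (unshiftBar J c) ≠ 0}
        = (fun J => unshiftBar J c) ⁻¹' {J | m (unshiftBar I c) J ≠ 0} := rfl
    rw [this]
    exact Set.Finite.preimage ((unshiftEquiv c).injective.injOn) (f1 _)
  · intro J
    have : {I | m (unshiftBar I c) (unshiftBar J c) ≠ 0}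
        = (fun I => unshiftBar I c) ⁻¹' {I | m I (unshiftBar J c) ≠ 0} := rfl
    rw [this]
    exact Set.Finite.preimage ((unshiftEquiv c).injective.injOn) (f2 _)
  · intro I; rw [hsum1]; exact s1 _
  · intro J; rw [hsum2]; exact s2 _
  · intro I hI
    rw [hsum1] at hI
    have := d1 _ hI
    rwa [len_unshiftBar] at this
  · intro J hJ
    rw [hsum2] at hJ
    have := d2 _ hJ
    rwa [len_unshiftBar] at this
  · intro I J hm
    exact ⟨hback _ _ (cl _ _ hm).1, hback _ _ (cl _ _ hm).2⟩

lemma HasMatching.shift {B B' : Barcode} {δ : ℝ} (c : ℝ) (h : HasMatching B B' δ) :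
    HasMatching (B.shift c) (B'.shift c) δ :=
  let ⟨m, hm⟩ := h
  ⟨_, hm.shift c⟩

lemma bottleneck_le_of {B B' : Barcode} {δ : ℝ} (h0 : 0 ≤ δ) (h : HasMatching B B' δ) :
    bottleneck B B' ≤ (δ : EReal) :=
  sInf_le ⟨δ, h0, rfl, h⟩

lemma exists_matching_of_bottleneck_lt {B B' : Barcode} {ε : ℝ}
    (h : bottleneck B B' < (ε : EReal)) :
    ∃ δ : ℝ, 0 ≤ δ ∧ δ < ε ∧ HasMatching B B' δ := by
  obtain ⟨x, hx, hlt⟩ := sInf_lt_iff.1 h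
  obtain ⟨δ, h0, rfl, hm⟩ := hx
  exact ⟨δ, h0, EReal.coe_lt_coe_iff.1 hlt, hm⟩

lemma qdist_le_bottleneck (B B' : Barcode) (c : ℝ) :
    qdist B B' ≤ bottleneck B (B'.shift c) :=
  sInf_le ⟨c, rfl⟩

lemma exists_matching_of_qdist_lt {B B' : Barcode} {ε : ℝ} (h : qdist B B' < (ε : EReal)) :
    ∃ c δ : ℝ, 0 ≤ δ ∧ δ < ε ∧ HasMatching B (B'.shift c) δ := by
  obtain ⟨x, hx, hlt⟩ := sInf_lt_iff.1 h
  obtain ⟨c, rfl⟩ := hx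
  obtain ⟨δ, h0, hδ, hm⟩ := exists_matching_of_bottleneck_lt hlt
  exact ⟨c, δ, h0, hδ, hm⟩

lemma qdist_lt_of_matching {B B' : Barcode} {c δ ε : ℝ} (h0 : 0 ≤ δ) (hlt : δ < ε)
    (h : HasMatching B (B'.shift c) δ) : qdist B B' < (ε : EReal) :=
  lt_of_le_of_lt ((qdist_le_bottleneck B B' c).trans (bottleneck_le_of h0 h))
    (EReal.coe_lt_coe_iff.2 hlt)

end Barcode

/-! ### Counting helpers -/

lemma ncard_fiber_finsum {α β : Type*} {s : Set α} (hs : s.Finite) (f : α → β) :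
    ∑ᶠ b, (s ∩ f ⁻¹' {b}).ncard = s.ncard := by
  classical
  have him : (f '' s).Finite := hs.image f
  have hsupp : (Function.support fun b => (s ∩ f ⁻¹' {b}).ncard) ⊆ ↑him.toFinset := by
    intro b hb
    simp only [Function.mem_support] at hb
    obtain ⟨a, ha, hfa⟩ := Set.nonempty_of_ncard_ne_zero hb
    simp only [Set.Finite.coe_toFinset]
    exact ⟨a, ha, hfa⟩
  rw [finsum_eq_finset_sum_of_support_subset _ hsupp]
  have hfib : ∀ b, (s ∩ f ⁻¹' {b}).ncard
      = (hs.toFinset.filter fun a => f a = b).card := by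
    intro b
    rw [← Set.ncard_coe_finset]
    congr 1
    ext a
    simp [Set.mem_inter_iff, Set.Finite.mem_toFinset]
  calc ∑ b ∈ him.toFinset, (s ∩ f ⁻¹' {b}).ncard
      = ∑ b ∈ him.toFinset, (hs.toFinset.filter fun a => f a = b).card := by
        exact Finset.sum_congr rfl fun b _ => hfib b
  _ = hs.toFinset.card := by
        refine (Finset.card_eq_sum_card_fiberwise ?_).symm
        intro a ha
        simp only [Finset.mem_coe, Set.Finite.mem_toFinset] at ha ⊢
        exact ⟨a, ha, rfl⟩
  _ = s.ncard := (Set.ncard_eq_toFinset_card _ hs).symm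

/-- The set of "copies" of a bar with multiplicity `n`. -/
def copiesSet (I : Bar) (n : ℕ) : Set (Bar × ℕ) := {q | q.1 = I ∧ q.2 < n}

lemma copiesSet_eq_image (I : Bar) (n : ℕ) :
    copiesSet I n = (fun i => (I, i)) '' Set.Iio n := by
  ext q
  constructor
  · rintro ⟨h1, h2⟩
    exact ⟨q.2, h2, by rw [← h1]⟩
  · rintro ⟨i, hi, rfl⟩
    exact ⟨rfl, hi⟩

lemma copiesSet_finite (I : Bar) (n : ℕ) : (copiesSet I n).Finite := by
  rw [copiesSet_eq_image]
  exact (Set.finite_Iio n).image _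

lemma copiesSet_ncard (I : Bar) (n : ℕ) : (copiesSet I n).ncard = n := by
  rw [copiesSet_eq_image, Set.ncard_image_of_injective _ (fun a b h => by
    simpa using congrArg Prod.snd h), ← Finset.coe_Iio, Set.ncard_coe_finset, Nat.card_Iio]

end Part2
/-! ### Part 3: copy-level matchings -/

section Part3

open Barcode

/-- A copy of a bar of `B`: a bar together with a copy index below its multiplicity. -/
def Cop (B : Barcode) : Type := {q : Bar × ℕ // q.2 < B.mult q.1}

def Cop.bar {B : Barcode} (c : Cop B) : Bar := c.1.1

/-- A `δ`-matching at the level of individual copies: a partial injection of copies. -/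
def IsCopyMatching (B B' : Barcode) (δ : ℝ) (σ : Cop B → Option (Cop B')) : Prop :=
  (∀ c c' d, σ c = some d → σ c' = some d → c = c') ∧
  (∀ c, σ c = none → c.bar.len ≤ ((2 * δ : ℝ) : EReal)) ∧
  (∀ d : Cop B', (∀ c, σ c ≠ some d) → d.bar.len ≤ ((2 * δ : ℝ) : EReal)) ∧
  (∀ c d, σ c = some d → barSub c.bar d.bar δ ∧ barSub d.bar c.bar δ)

/-- Composition of copy matchings. -/
lemma IsCopyMatching.comp {B B' B'' : Barcode} {δ₁ δ₂ : ℝ}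
    {σ : Cop B → Option (Cop B')} {τ : Cop B' → Option (Cop B'')}
    (h1 : 0 ≤ δ₁) (h2 : 0 ≤ δ₂)
    (hσ : IsCopyMatching B B' δ₁ σ) (hτ : IsCopyMatching B' B'' δ₂ τ) :
    IsCopyMatching B B'' (δ₁ + δ₂) (fun c => (σ c).bind τ) := by
  classical
  obtain ⟨inj1, delL1, delR1, cl1⟩ := hσ
  obtain ⟨inj2, delL2, delR2, cl2⟩ := hτ
  have hco : ((2 * δ₁ : ℝ) : EReal) ≤ ((2 * (δ₁ + δ₂) : ℝ) : EReal) :=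
    EReal.coe_le_coe_iff.2 (by linarith)
  have hco2 : ((2 * δ₂ : ℝ) : EReal) ≤ ((2 * (δ₁ + δ₂) : ℝ) : EReal) :=
    EReal.coe_le_coe_iff.2 (by linarith)
  refine ⟨?_, ?_, ?_, ?_⟩
  · intro c c' d hc hc'
    obtain ⟨e, he, hed⟩ := Option.bind_eq_some_iff.1 hc
    obtain ⟨e', he', hed'⟩ := Option.bind_eq_some_iff.1 hc'
    have : e = e' := inj2 _ _ _ hed hed'
    subst this
    exact inj1 _ _ _ he he'
  · intro c hc
    simp only at hc
    cases hce : σ c with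
    | none => exact (delL1 c hce).trans hco
    | some e =>
        rw [hce] at hc
        simp only [Option.bind_some] at hc
        have hlen : e.bar.len ≤ ((2 * δ₂ : ℝ) : EReal) := delL2 e hc
        exact len_le_two_mul_of_close (cl1 c e hce).1 (cl1 c e hce).2 hlen
  · intro d hd
    by_cases he : ∃ e, τ e = some d
    · obtain ⟨e, hed⟩ := he
      have hne : ∀ c, σ c ≠ some e := by
        intro c hce
        have hd' : (σ c).bind τ ≠ some d := hd c
        rw [hce] at hd'
        simp only [Option.bind_some] at hd'
        exact hd' hed
      have hlen : e.bar.len ≤ ((2 * δ₁ : ℝ) : EReal) := delR1 e hne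
      have := len_le_two_mul_of_close (cl2 e d hed).2 (cl2 e d hed).1 hlen
      rwa [show (2 * (δ₂ + δ₁) : ℝ) = 2 * (δ₁ + δ₂) by ring] at this
    · push_neg at he
      exact (delR2 d he).trans hco2
  · intro c d hc
    obtain ⟨e, he, hed⟩ := Option.bind_eq_some_iff.1 hc
    exact ⟨((cl1 c e he).1.trans (cl2 e d hed).1),
      (((cl2 e d hed).2.trans (cl1 c e he).2).mono (le_of_eq (add_comm δ₂ δ₁)))⟩

/-! #### Realization of a multiplicity matching as a copy matching -/

variable {m : Bar → Bar → ℕ}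

/-- Block type for the copies of `I` matched by `m`. -/
abbrev MatchD (m : Bar → Bar → ℕ) (f1 : ∀ I, {J | m I J ≠ 0}.Finite) (I : Bar) : Type :=
  Σ J : (f1 I).toFinset, Fin (m I (J : Bar))

/-- Block type for the copies of `J` matched by `m`. -/
abbrev MatchE (m : Bar → Bar → ℕ) (f2 : ∀ J, {I | m I J ≠ 0}.Finite) (J : Bar) : Type :=
  Σ I : (f2 J).toFinset, Fin (m (I : Bar) J)

lemma card_matchD (f1 : ∀ I, {J | m I J ≠ 0}.Finite) (I : Bar) :
    Fintype.card (MatchD m f1 I) = ∑ᶠ J, m I J := by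
  show Fintype.card (Σ J : (f1 I).toFinset, Fin (m I (J : Bar))) = _
  rw [Fintype.card_sigma]
  simp only [Fintype.card_fin]
  rw [Finset.sum_coe_sort ((f1 I).toFinset) (fun J => m I J)]
  rw [finsum_eq_finset_sum_of_support_subset (fun J => m I J)
    (s := (f1 I).toFinset) (by intro J hJ; simpa using hJ)]

lemma card_matchE (f2 : ∀ J, {I | m I J ≠ 0}.Finite) (J : Bar) :
    Fintype.card (MatchE m f2 J) = ∑ᶠ I, m I J := by
  show Fintype.card (Σ I : (f2 J).toFinset, Fin (m (I : Bar) J)) = _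
  rw [Fintype.card_sigma]
  simp only [Fintype.card_fin]
  rw [Finset.sum_coe_sort ((f2 J).toFinset) (fun I => m I J)]
  rw [finsum_eq_finset_sum_of_support_subset (fun I => m I J)
    (s := (f2 J).toFinset) (by intro I hI; simpa using hI)]

/-- The target copy assigned to the `t`-th copy of `I` matched to `J`. -/
def realTarget (B' : Barcode) (f2 : ∀ J, {I | m I J ≠ 0}.Finite)
    (ι : ∀ J, MatchE m f2 J ↪ Fin (B'.mult J))
    (I J : Bar) (hIJ : m I J ≠ 0) (t : Fin (m I J)) : Cop B' :=
  ⟨(J, (ι J ⟨⟨I, (f2 J).mem_toFinset.2 hIJ⟩, t⟩).1),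
    (ι J ⟨⟨I, (f2 J).mem_toFinset.2 hIJ⟩, t⟩).2⟩

lemma realTarget_bar (B' : Barcode) (f2 : ∀ J, {I | m I J ≠ 0}.Finite)
    (ι : ∀ J, MatchE m f2 J ↪ Fin (B'.mult J))
    (I J : Bar) (hIJ : m I J ≠ 0) (t : Fin (m I J)) :
    (realTarget B' f2 ι I J hIJ t).bar = J := rfl

lemma realTarget_inj (B' : Barcode) (f2 : ∀ J, {I | m I J ≠ 0}.Finite)
    (ι : ∀ J, MatchE m f2 J ↪ Fin (B'.mult J))
    {I J I' J' : Bar} {hIJ : m I J ≠ 0} {hIJ' : m I' J' ≠ 0}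
    {t : Fin (m I J)} {t' : Fin (m I' J')}
    (h : realTarget B' f2 ι I J hIJ t = realTarget B' f2 ι I' J' hIJ' t') :
    I = I' ∧ J = J' ∧ HEq t t' := by
  have hJ : J = J' := congrArg (fun d => d.1.1) h
  subst hJ
  have hval : (ι J ⟨⟨I, (f2 J).mem_toFinset.2 hIJ⟩, t⟩).1
      = (ι J ⟨⟨I', (f2 J).mem_toFinset.2 hIJ'⟩, t'⟩).1 := congrArg (fun d => d.1.2) h
  have hfin : (ι J) ⟨⟨I, (f2 J).mem_toFinset.2 hIJ⟩, t⟩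
      = (ι J) ⟨⟨I', (f2 J).mem_toFinset.2 hIJ'⟩, t'⟩ := Fin.ext hval
  have hE := (ι J).injective hfin
  have hI : I = I' := congrArg (fun e => (e.1 : Bar)) hE
  subst hI
  injection hE with hE1 hE2
  exact ⟨rfl, rfl, heq_of_eq hE2⟩

lemma realTarget_congr {B' : Barcode} (f2 : ∀ J, {I | m I J ≠ 0}.Finite)
    (ι : ∀ J, MatchE m f2 J ↪ Fin (B'.mult J))
    {f1 : ∀ I, {J | m I J ≠ 0}.Finite} {I : Bar} (x y : MatchD m f1 I) (h : x = y) :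
    realTarget B' f2 ι I (x.1 : Bar) (Nat.ne_zero_of_lt x.2.isLt) x.2
      = realTarget B' f2 ι I (y.1 : Bar) (Nat.ne_zero_of_lt y.2.isLt) y.2 := by
  subst h; rfl

/-- The copy matching realizing a multiplicity matching. -/
def realσ (B B' : Barcode) (m : Bar → Bar → ℕ)
    (f1 : ∀ I, {J | m I J ≠ 0}.Finite) (f2 : ∀ J, {I | m I J ≠ 0}.Finite)
    (ρ : ∀ I, MatchD m f1 I ↪ Fin (B.mult I))
    (ι : ∀ J, MatchE m f2 J ↪ Fin (B'.mult J)) : Cop B → Option (Cop B') := fun c =>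
  if h : ∃ x : MatchD m f1 c.1.1, ρ c.1.1 x = (⟨c.1.2, c.2⟩ : Fin (B.mult c.1.1)) then
    some (realTarget B' f2 ι c.1.1 (h.choose.1 : Bar)
      (Nat.ne_zero_of_lt h.choose.2.isLt) h.choose.2)
  else none

lemma realσ_eq_some {B B' : Barcode}
    {f1 : ∀ I, {J | m I J ≠ 0}.Finite} {f2 : ∀ J, {I | m I J ≠ 0}.Finite}
    {ρ : ∀ I, MatchD m f1 I ↪ Fin (B.mult I)}
    {ι : ∀ J, MatchE m f2 J ↪ Fin (B'.mult J)} {c : Cop B} {d : Cop B'}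
    (h : realσ B B' m f1 f2 ρ ι c = some d) :
    ∃ x : MatchD m f1 c.1.1, ρ c.1.1 x = (⟨c.1.2, c.2⟩ : Fin (B.mult c.1.1)) ∧
      d = realTarget B' f2 ι c.1.1 (x.1 : Bar) (Nat.ne_zero_of_lt x.2.isLt) x.2 := by
  by_cases hex : ∃ x : MatchD m f1 c.1.1, ρ c.1.1 x = (⟨c.1.2, c.2⟩ : Fin (B.mult c.1.1))
  · refine ⟨hex.choose, hex.choose_spec, ?_⟩
    simp only [realσ, dif_pos hex] at h
    exact (Option.some.inj h).symm
  · simp only [realσ, dif_neg hex] at h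
    cases h

lemma realσ_eq_none {B B' : Barcode}
    {f1 : ∀ I, {J | m I J ≠ 0}.Finite} {f2 : ∀ J, {I | m I J ≠ 0}.Finite}
    {ρ : ∀ I, MatchD m f1 I ↪ Fin (B.mult I)}
    {ι : ∀ J, MatchE m f2 J ↪ Fin (B'.mult J)} {c : Cop B}
    (h : realσ B B' m f1 f2 ρ ι c = none) :
    ¬∃ x : MatchD m f1 c.1.1, ρ c.1.1 x = (⟨c.1.2, c.2⟩ : Fin (B.mult c.1.1)) := by
  intro hex
  simp only [realσ, dif_pos hex] at h
  cases h

lemma realσ_hit {B B' : Barcode}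
    {f1 : ∀ I, {J | m I J ≠ 0}.Finite} {f2 : ∀ J, {I | m I J ≠ 0}.Finite}
    (ρ : ∀ I, MatchD m f1 I ↪ Fin (B.mult I))
    (ι : ∀ J, MatchE m f2 J ↪ Fin (B'.mult J))
    (J : Bar) (e : MatchE m f2 J) (x₀ : MatchD m f1 (e.1 : Bar))
    (hx1 : (x₀.1 : Bar) = J) (hx2 : HEq x₀.2 e.2) :
    realσ B B' m f1 f2 ρ ι
        ⟨((e.1 : Bar), (ρ (e.1 : Bar) x₀).1), (ρ (e.1 : Bar) x₀).2⟩
      = some ⟨(J, (ι J e).1), (ι J e).2⟩ := by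
  obtain ⟨⟨J', memJ'⟩, t⟩ := x₀
  simp only at hx1 hx2
  subst hx1
  have ht : t = e.2 := eq_of_heq hx2
  subst ht
  have hex : ∃ x : MatchD m f1 (e.1 : Bar),
      ρ (e.1 : Bar) x = ρ (e.1 : Bar) ⟨⟨J', memJ'⟩, e.2⟩ := ⟨⟨⟨J', memJ'⟩, e.2⟩, rfl⟩
  have goal1 : realσ B B' m f1 f2 ρ ι
      ⟨((e.1 : Bar), (ρ (e.1 : Bar) ⟨⟨J', memJ'⟩, e.2⟩).1),
        (ρ (e.1 : Bar) ⟨⟨J', memJ'⟩, e.2⟩).2⟩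
      = some (realTarget B' f2 ι (e.1 : Bar) (hex.choose.1 : Bar)
          (Nat.ne_zero_of_lt hex.choose.2.isLt) hex.choose.2) := by
    simp only [realσ]
    rw [dif_pos hex]
  rw [goal1]
  have hch : hex.choose = ⟨⟨J', memJ'⟩, e.2⟩ := (ρ (e.1 : Bar)).injective hex.choose_spec
  rw [realTarget_congr f2 ι _ _ hch]
  rfl

/-- Realization: every multiplicity matching yields a copy matching. -/
lemma exists_copyMatching_of_hasMatching {B B' : Barcode} {δ : ℝ}
    (h : HasMatching B B' δ) : ∃ σ, IsCopyMatching B B' δ σ := by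
  classical
  obtain ⟨m, f1, f2, s1, s2, d1, d2, cl⟩ := h
  have ρex : ∀ I, Nonempty (MatchD m f1 I ↪ Fin (B.mult I)) := by
    intro I
    apply Function.Embedding.nonempty_of_card_le
    rw [Fintype.card_fin, card_matchD]
    exact s1 I
  have ιex : ∀ J, Nonempty (MatchE m f2 J ↪ Fin (B'.mult J)) := by
    intro J
    apply Function.Embedding.nonempty_of_card_le
    rw [Fintype.card_fin, card_matchE]
    exact s2 J
  let ρ : ∀ I, MatchD m f1 I ↪ Fin (B.mult I) := fun I => (ρex I).some
  let ι : ∀ J, MatchE m f2 J ↪ Fin (B'.mult J) := fun J => (ιex J).some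
  refine ⟨realσ B B' m f1 f2 ρ ι, ?_, ?_, ?_, ?_⟩
  · -- injectivity
    rintro ⟨⟨I, i⟩, hci⟩ ⟨⟨I', i'⟩, hci'⟩ d hc hc'
    obtain ⟨x, hx, hdx⟩ := realσ_eq_some hc
    obtain ⟨x', hx', hdx'⟩ := realσ_eq_some hc'
    obtain ⟨hI, hJ, ht⟩ := realTarget_inj B' f2 ι (hdx.symm.trans hdx')
    simp only at hI hJ ht hx hx'
    subst hI
    have hxx : x = x' := by
      refine Sigma.ext (Subtype.ext hJ) ht
    subst hxx
    have : i = i' := by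
      have := hx.symm.trans hx'
      exact congrArg Fin.val this
    subst this
    rfl
  · -- left deletion
    intro c hc
    have hnot : (⟨c.1.2, c.2⟩ : Fin (B.mult c.1.1)) ∉ Set.range (ρ c.1.1) := by
      rintro ⟨x, hx⟩
      exact realσ_eq_none hc ⟨x, hx⟩
    have hcard := Fintype.card_lt_of_injective_of_notMem
      (ρ c.1.1) (ρ c.1.1).injective hnot
    rw [Fintype.card_fin, card_matchD] at hcard
    exact d1 c.1.1 hcard
  · -- right deletion
    intro d hd
    have hnot : (⟨d.1.2, d.2⟩ : Fin (B'.mult d.1.1)) ∉ Set.range (ι d.1.1) := by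
      rintro ⟨e, he⟩
      have memJ : (d.1.1 : Bar) ∈ (f1 (e.1 : Bar)).toFinset :=
        (f1 (e.1 : Bar)).mem_toFinset.2 (Nat.ne_zero_of_lt e.2.isLt)
      have hhit := realσ_hit ρ ι d.1.1 e ⟨⟨d.1.1, memJ⟩, e.2⟩ rfl HEq.rfl
      rw [he] at hhit
      exact hd _ hhit
    have hcard := Fintype.card_lt_of_injective_of_notMem
      (ι d.1.1) (ι d.1.1).injective hnot
    rw [Fintype.card_fin, card_matchE] at hcard
    exact d2 d.1.1 hcard
  · -- closeness
    intro c d hc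
    obtain ⟨x, hx, hdx⟩ := realσ_eq_some hc
    have hcl := cl c.1.1 (x.1 : Bar) (Nat.ne_zero_of_lt x.2.isLt)
    rw [hdx]
    exact hcl

end Part3
/-! ### Part 4: from copy matchings back to multiplicity matchings; triangle inequality -/

section Part4

open Barcode

variable {B B' : Barcode}

/-- Target bar of a copy under a copy matching (junk value if undefined). -/
def tbar (σ : Cop B → Option (Cop B')) (q : Bar × ℕ) : Bar :=
  if h : q.2 < B.mult q.1 then
    match σ ⟨q, h⟩ with
    | some d => d.bar
    | none => ((0 : ℝ), (⊥ : EReal))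
  else ((0 : ℝ), (⊥ : EReal))

/-- Target copy of a copy under a copy matching (junk value if undefined). -/
def tcop (σ : Cop B → Option (Cop B')) (q : Bar × ℕ) : Bar × ℕ :=
  if h : q.2 < B.mult q.1 then
    match σ ⟨q, h⟩ with
    | some d => d.1
    | none => (((0 : ℝ), (⊥ : EReal)), 0)
  else (((0 : ℝ), (⊥ : EReal)), 0)

lemma tbar_eq {σ : Cop B → Option (Cop B')} {q : Bar × ℕ} (h : q.2 < B.mult q.1)
    {d : Cop B'} (hd : σ ⟨q, h⟩ = some d) : tbar σ q = d.bar := by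
  simp only [tbar, dif_pos h, hd]

lemma tcop_eq {σ : Cop B → Option (Cop B')} {q : Bar × ℕ} (h : q.2 < B.mult q.1)
    {d : Cop B'} (hd : σ ⟨q, h⟩ = some d) : tcop σ q = d.1 := by
  simp only [tcop, dif_pos h, hd]

/-- Matched copies of bar `I`. -/
def sAll (σ : Cop B → Option (Cop B')) (I : Bar) : Set (Bar × ℕ) :=
  {q | q.1 = I ∧ ∃ h : q.2 < B.mult q.1, (σ ⟨q, h⟩).isSome}

/-- Copies matched to a copy of bar `J`. -/
def tAll (σ : Cop B → Option (Cop B')) (J : Bar) : Set (Bar × ℕ) :=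
  {q | ∃ h : q.2 < B.mult q.1, ∃ d, σ ⟨q, h⟩ = some d ∧ d.bar = J}

/-- The multiplicity matching induced by a copy matching. -/
def cmm (σ : Cop B → Option (Cop B')) (I J : Bar) : ℕ :=
  (sAll σ I ∩ tbar σ ⁻¹' {J}).ncard

lemma sAll_subset (σ : Cop B → Option (Cop B')) (I : Bar) :
    sAll σ I ⊆ copiesSet I (B.mult I) := by
  rintro q ⟨h1, h2, _⟩
  exact ⟨h1, by rwa [h1] at h2⟩

lemma sAll_finite (σ : Cop B → Option (Cop B')) (I : Bar) : (sAll σ I).Finite :=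
  (copiesSet_finite I (B.mult I)).subset (sAll_subset σ I)

lemma mem_inter_iff_matched {σ : Cop B → Option (Cop B')} {I J : Bar} {q : Bar × ℕ} :
    q ∈ sAll σ I ∩ tbar σ ⁻¹' {J} ↔
      q.1 = I ∧ ∃ h : q.2 < B.mult q.1, ∃ d, σ ⟨q, h⟩ = some d ∧ d.bar = J := by
  constructor
  · rintro ⟨⟨h1, h, hsome⟩, hpre⟩
    obtain ⟨d, hd⟩ := Option.isSome_iff_exists.1 hsome
    refine ⟨h1, h, d, hd, ?_⟩
    have := tbar_eq h hd
    rw [Set.mem_preimage, Set.mem_singleton_iff] at hpre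
    rw [← hpre, this]
  · rintro ⟨h1, h, d, hd, hbar⟩
    refine ⟨⟨h1, h, by rw [hd]; rfl⟩, ?_⟩
    rw [Set.mem_preimage, Set.mem_singleton_iff, tbar_eq h hd, hbar]

lemma tAll_fiber {σ : Cop B → Option (Cop B')} (I J : Bar) :
    tAll σ J ∩ (fun q : Bar × ℕ => q.1) ⁻¹' {I} = sAll σ I ∩ tbar σ ⁻¹' {J} := by
  ext q
  rw [mem_inter_iff_matched]
  constructor
  · rintro ⟨⟨h, d, hd, hbar⟩, hq⟩
    rw [Set.mem_preimage, Set.mem_singleton_iff] at hq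
    exact ⟨hq, h, d, hd, hbar⟩
  · rintro ⟨h1, h, d, hd, hbar⟩
    exact ⟨⟨h, d, hd, hbar⟩, by rwa [Set.mem_preimage, Set.mem_singleton_iff]⟩

lemma tcop_mapsTo {σ : Cop B → Option (Cop B')} (J : Bar) :
    Set.MapsTo (tcop σ) (tAll σ J) (copiesSet J (B'.mult J)) := by
  rintro q ⟨h, d, hd, hbar⟩
  rw [tcop_eq h hd]
  refine ⟨hbar, ?_⟩
  have := d.2
  rwa [show d.1.1 = J from hbar] at this

lemma tcop_injOn {σ : Cop B → Option (Cop B')}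
    (hinj : ∀ c c' d, σ c = some d → σ c' = some d → c = c') (J : Bar) :
    Set.InjOn (tcop σ) (tAll σ J) := by
  rintro q ⟨h, d, hd, _⟩ q' ⟨h', d', hd', _⟩ heq
  rw [tcop_eq h hd, tcop_eq h' hd'] at heq
  have hdd : d = d' := Subtype.ext heq
  subst hdd
  have := hinj ⟨q, h⟩ ⟨q', h'⟩ d hd hd'
  exact congrArg Subtype.val this

lemma tAll_finite {σ : Cop B → Option (Cop B')}
    (hinj : ∀ c c' d, σ c = some d → σ c' = some d → c = c') (J : Bar) :
    (tAll σ J).Finite :=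
  Set.Finite.of_finite_image
    ((copiesSet_finite J (B'.mult J)).subset ((tcop_mapsTo J).image_subset))
    (tcop_injOn hinj J)

/-- Counting: a copy matching induces a multiplicity matching. -/
lemma IsCopyMatching.toHasMatching {δ : ℝ} {σ : Cop B → Option (Cop B')}
    (hσ : IsCopyMatching B B' δ σ) : HasMatching B B' δ := by
  classical
  obtain ⟨hinj, delL, delR, cl⟩ := hσ
  refine ⟨cmm σ, ?_, ?_, ?_, ?_, ?_, ?_, ?_⟩
  · -- finiteness of rows
    intro I
    apply ((sAll_finite σ I).image (tbar σ)).subset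
    intro J hJ
    obtain ⟨q, hq⟩ := Set.nonempty_of_ncard_ne_zero hJ
    exact ⟨q, hq.1, by
      have := hq.2
      rwa [Set.mem_preimage, Set.mem_singleton_iff] at this⟩
  · -- finiteness of columns
    intro J
    apply ((tAll_finite hinj J).image (fun q : Bar × ℕ => q.1)).subset
    intro I hI
    obtain ⟨q, hq⟩ := Set.nonempty_of_ncard_ne_zero hI
    rw [mem_inter_iff_matched] at hq
    obtain ⟨h1, h, d, hd, hbar⟩ := hq
    exact ⟨q, ⟨h, d, hd, hbar⟩, h1⟩
  · -- row sums
    intro I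
    rw [show (∑ᶠ J, cmm σ I J) = (sAll σ I).ncard from ncard_fiber_finsum (sAll_finite σ I) _]
    calc (sAll σ I).ncard ≤ (copiesSet I (B.mult I)).ncard :=
          Set.ncard_le_ncard (sAll_subset σ I) (copiesSet_finite _ _)
    _ = B.mult I := copiesSet_ncard _ _
  · -- column sums
    intro J
    have hfib : ∀ I, tAll σ J ∩ (fun q : Bar × ℕ => q.1) ⁻¹' {I}
        = sAll σ I ∩ tbar σ ⁻¹' {J} := fun I => tAll_fiber I J
    have : (∑ᶠ I, cmm σ I J) = (tAll σ J).ncard := by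
      rw [← ncard_fiber_finsum (tAll_finite hinj J) (fun q : Bar × ℕ => q.1)]
      exact finsum_congr fun I => by rw [cmm, ← hfib I]
    rw [this]
    calc (tAll σ J).ncard ≤ (copiesSet J (B'.mult J)).ncard :=
          Set.ncard_le_ncard_of_injOn (tcop σ) (tcop_mapsTo J) (tcop_injOn hinj J)
            (copiesSet_finite _ _)
    _ = B'.mult J := copiesSet_ncard _ _
  · -- row deletion
    intro I hlt
    rw [show (∑ᶠ J, cmm σ I J) = (sAll σ I).ncard from ncard_fiber_finsum (sAll_finite σ I) _]
      at hlt
    have hne : sAll σ I ≠ copiesSet I (B.mult I) := by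
      intro heq
      rw [heq, copiesSet_ncard] at hlt
      exact lt_irrefl _ hlt
    obtain ⟨q, hqc, hqn⟩ : ∃ q, q ∈ copiesSet I (B.mult I) ∧ q ∉ sAll σ I := by
      by_contra hcon
      push_neg at hcon
      exact hne (Set.Subset.antisymm (sAll_subset σ I) hcon)
    obtain ⟨hq1, hq2⟩ := hqc
    have hq2' : q.2 < B.mult q.1 := by rwa [hq1]
    have hnone : σ ⟨q, hq2'⟩ = none := by
      by_contra hs
      obtain ⟨d, hd⟩ := Option.ne_none_iff_exists'.1 hs
      exact hqn ⟨hq1, hq2', by rw [hd]; rfl⟩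
    have := delL ⟨q, hq2'⟩ hnone
    rwa [show (Cop.bar ⟨q, hq2'⟩ : Bar) = I from hq1] at this
  · -- column deletion
    intro J hlt
    have hfib : ∀ I, tAll σ J ∩ (fun q : Bar × ℕ => q.1) ⁻¹' {I}
        = sAll σ I ∩ tbar σ ⁻¹' {J} := fun I => tAll_fiber I J
    have hsum : (∑ᶠ I, cmm σ I J) = (tAll σ J).ncard := by
      rw [← ncard_fiber_finsum (tAll_finite hinj J) (fun q : Bar × ℕ => q.1)]
      exact finsum_congr fun I => by rw [cmm, ← hfib I]
    rw [hsum] at hlt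
    have himlt : ((tcop σ) '' (tAll σ J)).ncard < (copiesSet J (B'.mult J)).ncard := by
      rw [Set.ncard_image_of_injOn (tcop_injOn hinj J), copiesSet_ncard]
      exact hlt
    have hne : (tcop σ) '' (tAll σ J) ≠ copiesSet J (B'.mult J) := by
      intro heq
      rw [heq] at himlt
      exact lt_irrefl _ himlt
    obtain ⟨p, hpc, hpn⟩ : ∃ p, p ∈ copiesSet J (B'.mult J) ∧ p ∉ (tcop σ) '' (tAll σ J) := by
      by_contra hcon
      push_neg at hcon
      exact hne (Set.Subset.antisymm (tcop_mapsTo J).image_subset hcon)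
    obtain ⟨hp1, hp2⟩ := hpc
    have hp2' : p.2 < B'.mult p.1 := by rwa [hp1]
    have hnohit : ∀ c, σ c ≠ some ⟨p, hp2'⟩ := by
      intro c hc
      apply hpn
      refine ⟨c.1, ⟨c.2, ⟨p, hp2'⟩, by exact hc, hp1⟩, ?_⟩
      rw [tcop_eq c.2 (by exact hc)]
    have := delR ⟨p, hp2'⟩ hnohit
    rwa [show (Cop.bar ⟨p, hp2'⟩ : Bar) = J from hp1] at this
  · -- closeness
    intro I J hm
    obtain ⟨q, hq⟩ := Set.nonempty_of_ncard_ne_zero hm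
    rw [mem_inter_iff_matched] at hq
    obtain ⟨h1, h, d, hd, hbar⟩ := hq
    have := cl ⟨q, h⟩ d hd
    rwa [show (Cop.bar ⟨q, h⟩ : Bar) = I from h1, hbar] at this

/-- Triangle composition for matchings. -/
lemma Barcode.HasMatching.comp {B1 B2 B3 : Barcode} {δ₁ δ₂ : ℝ} (h1 : 0 ≤ δ₁) (h2 : 0 ≤ δ₂)
    (m1 : HasMatching B1 B2 δ₁) (m2 : HasMatching B2 B3 δ₂) :
    HasMatching B1 B3 (δ₁ + δ₂) := by
  obtain ⟨σ, hσ⟩ := exists_copyMatching_of_hasMatching m1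
  obtain ⟨τ, hτ⟩ := exists_copyMatching_of_hasMatching m2
  exact (hσ.comp h1 h2 hτ).toHasMatching

/-- Triangle inequality for `qdist`, in `<` form. -/
lemma Barcode.qdist_lt_add {B1 B2 B3 : Barcode} {a b : ℝ}
    (h12 : qdist B1 B2 < (a : EReal)) (h23 : qdist B2 B3 < (b : EReal)) :
    qdist B1 B3 < ((a + b : ℝ) : EReal) := by
  obtain ⟨c1, δ1, hδ1, hlt1, hm1⟩ := exists_matching_of_qdist_lt h12
  obtain ⟨c2, δ2, hδ2, hlt2, hm2⟩ := exists_matching_of_qdist_lt h23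
  have hm2' : HasMatching (B2.shift c1) (B3.shift (c2 + c1)) δ2 := by
    have := hm2.shift c1
    rwa [Barcode.shift_shift] at this
  have hcomp : HasMatching B1 (B3.shift (c2 + c1)) (δ1 + δ2) := hm1.comp hδ1 hδ2 hm2'
  exact qdist_lt_of_matching (by linarith) (by linarith) hcomp

end Part4
/-! ### Part 5: chains and the limit barcode -/

section Part5

open Barcode Filter

variable (v : ℕ → Barcode) (σ : ∀ k, Cop (v k) → Option (Cop (v (k+1))))

/-- A pointed copy: a level together with a copy at that level. -/
def PtC : Type := Σ k, Cop (v k)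

def PtC.bar (c : PtC v) : Bar := c.2.bar

lemma PtC.valid (c : PtC v) : (PtC.bar v c).IsValid :=
  (v c.1).valid _ (Nat.ne_zero_of_lt c.2.2)

lemma PtC.bot_lt (c : PtC v) : (⊥ : EReal) < (PtC.bar v c).2 :=
  lt_trans (EReal.bot_lt_coe _) (c.valid)

/-- One step along the matchings. -/
def pstep (c : PtC v) : Option (PtC v) :=
  (σ c.1 c.2).map fun d => ⟨c.1 + 1, d⟩

/-- Iterated steps. -/
def piter : ℕ → PtC v → Option (PtC v)
  | 0, c => some c
  | (n+1), c => (piter n c).bind (pstep v σ)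

lemma piter_zero (c : PtC v) : piter v σ 0 c = some c := rfl

lemma piter_succ (n : ℕ) (c : PtC v) :
    piter v σ (n+1) c = (piter v σ n c).bind (pstep v σ) := rfl

lemma piter_succ_left (n : ℕ) (c : PtC v) :
    piter v σ (n+1) c = (pstep v σ c).bind (piter v σ n) := by
  induction n with
  | zero =>
      rw [piter_succ, piter_zero, Option.bind_some]
      cases pstep v σ c <;> rfl
  | succ n ih =>
      rw [piter_succ, ih, Option.bind_assoc]
      rfl

lemma piter_lvl {n : ℕ} {c d : PtC v} (h : piter v σ n c = some d) : d.1 = c.1 + n := by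
  induction n generalizing d with
  | zero => rw [piter_zero] at h; cases h; rfl
  | succ n ih =>
      rw [piter_succ] at h
      obtain ⟨e, he, hed⟩ := Option.bind_eq_some_iff.1 h
      obtain ⟨d', hd', rfl⟩ := Option.map_eq_some_iff.1 hed
      have := ih he
      simp only [this]
      omega

/-- Immortality: all iterates are defined. -/
def PImm (c : PtC v) : Prop := ∀ n, (piter v σ n c).isSome

lemma pimm_succ {c d : PtC v} (hc : pstep v σ c = some d) (h : PImm v σ d) :
    PImm v σ c := by
  intro n
  cases n with
  | zero => rfl
  | succ n => rw [piter_succ_left, hc, Option.bind_some]; exact h n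

lemma pimm_of_succ {c d : PtC v} (hc : pstep v σ c = some d) (h : PImm v σ c) :
    PImm v σ d := by
  intro n
  have := h (n+1)
  rwa [piter_succ_left, hc, Option.bind_some] at this

lemma pimm_step_exists {c : PtC v} (h : PImm v σ c) : ∃ d, pstep v σ c = some d := by
  have := h 1
  rw [piter_succ_left] at this
  cases hd : pstep v σ c with
  | none => rw [hd] at this; simp at this
  | some d => exact ⟨d, rfl⟩

lemma pimm_iter {c d : PtC v} {n : ℕ} (hc : piter v σ n c = some d) (h : PImm v σ c) :
    PImm v σ d := by
  induction n generalizing c with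
  | zero => rw [piter_zero] at hc; cases hc; exact h
  | succ n ih =>
      rw [piter_succ_left] at hc
      obtain ⟨e, he, hed⟩ := Option.bind_eq_some_iff.1 hc
      exact ih hed (pimm_of_succ v σ he h)

/-- Left endpoints along the chain. -/
def lseq (c : PtC v) (n : ℕ) : ℝ :=
  match piter v σ n c with
  | some d => (PtC.bar v d).1
  | none => 0

/-- Right endpoints along the chain (via `toReal`). -/
def rseq (c : PtC v) (n : ℕ) : ℝ :=
  match piter v σ n c with
  | some d => (PtC.bar v d).2.toReal
  | none => 0

lemma lseq_eq {c d : PtC v} {n : ℕ} (h : piter v σ n c = some d) :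
    lseq v σ c n = (PtC.bar v d).1 := by
  simp only [lseq, h]

lemma rseq_eq {c d : PtC v} {n : ℕ} (h : piter v σ n c = some d) :
    rseq v σ c n = (PtC.bar v d).2.toReal := by
  simp only [rseq, h]

lemma lseq_zero (c : PtC v) : lseq v σ c 0 = (PtC.bar v c).1 := lseq_eq v σ (piter_zero v σ c)

lemma rseq_zero (c : PtC v) : rseq v σ c 0 = (PtC.bar v c).2.toReal :=
  rseq_eq v σ (piter_zero v σ c)

lemma lseq_shift {c d : PtC v} (hc : pstep v σ c = some d) (n : ℕ) :
    lseq v σ d n = lseq v σ c (n+1) := by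
  simp only [lseq, piter_succ_left v σ n c, hc, Option.bind_some]

lemma rseq_shift {c d : PtC v} (hc : pstep v σ c = some d) (n : ℕ) :
    rseq v σ d n = rseq v σ c (n+1) := by
  simp only [rseq, piter_succ_left v σ n c, hc, Option.bind_some]

end Part5
/-! ### Part 5b: closeness along chains, limits -/

section Part5b

open Barcode Filter

variable (v : ℕ → Barcode) (σ : ∀ k, Cop (v k) → Option (Cop (v (k+1))))

lemma pstep_close (hσ : ∀ k, IsCopyMatching (v k) (v (k+1)) ((1/2 : ℝ)^k) (σ k))
    {c d : PtC v} (h : pstep v σ c = some d) :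
    barSub (PtC.bar v c) (PtC.bar v d) ((1/2 : ℝ)^c.1) ∧
      barSub (PtC.bar v d) (PtC.bar v c) ((1/2 : ℝ)^c.1) := by
  obtain ⟨d', hd', rfl⟩ := Option.map_eq_some_iff.1 h
  exact (hσ c.1).2.2.2 c.2 d' hd'

lemma pstep_none_len (hσ : ∀ k, IsCopyMatching (v k) (v (k+1)) ((1/2 : ℝ)^k) (σ k))
    {c : PtC v} (h : pstep v σ c = none) :
    (PtC.bar v c).len ≤ ((2 * (1/2 : ℝ)^c.1 : ℝ) : EReal) := by
  have : σ c.1 c.2 = none := by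
    cases hs : σ c.1 c.2 with
    | none => rfl
    | some d => rw [pstep, hs] at h; cases h
  exact (hσ c.1).2.1 c.2 this

lemma pstep_top_iff (hσ : ∀ k, IsCopyMatching (v k) (v (k+1)) ((1/2 : ℝ)^k) (σ k))
    {c d : PtC v} (h : pstep v σ c = some d) :
    ((PtC.bar v c).2 = ⊤ ↔ (PtC.bar v d).2 = ⊤) :=
  ⟨fun ht => (pstep_close v σ hσ h).1.top_of_top ht,
   fun ht => (pstep_close v σ hσ h).2.top_of_top ht⟩

lemma piter_top_iff (hσ : ∀ k, IsCopyMatching (v k) (v (k+1)) ((1/2 : ℝ)^k) (σ k))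
    {n : ℕ} {c d : PtC v} (h : piter v σ n c = some d) :
    ((PtC.bar v c).2 = ⊤ ↔ (PtC.bar v d).2 = ⊤) := by
  induction n generalizing c with
  | zero => rw [piter_zero] at h; cases h; rfl
  | succ n ih =>
      rw [piter_succ_left] at h
      obtain ⟨e, he, hed⟩ := Option.bind_eq_some_iff.1 h
      exact (pstep_top_iff v σ hσ he).trans (ih hed)

lemma pstep_left_dist (hσ : ∀ k, IsCopyMatching (v k) (v (k+1)) ((1/2 : ℝ)^k) (σ k))
    {c d : PtC v} (h : pstep v σ c = some d) :
    |(PtC.bar v c).1 - (PtC.bar v d).1| ≤ (1/2 : ℝ)^c.1 := by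
  obtain ⟨h1, h2⟩ := pstep_close v σ hσ h
  have := h1.1
  have := h2.1
  rw [abs_sub_le_iff]
  constructor <;> linarith

lemma pstep_right_dist (hσ : ∀ k, IsCopyMatching (v k) (v (k+1)) ((1/2 : ℝ)^k) (σ k))
    {c d : PtC v} (h : pstep v σ c = some d) (ht : (PtC.bar v c).2 ≠ ⊤) :
    |(PtC.bar v c).2.toReal - (PtC.bar v d).2.toReal| ≤ (1/2 : ℝ)^c.1 := by
  obtain ⟨h1, h2⟩ := pstep_close v σ hσ h
  have htd : (PtC.bar v d).2 ≠ ⊤ := fun hh => ht ((pstep_top_iff v σ hσ h).2 hh)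
  have hbc : (PtC.bar v c).2 ≠ ⊥ := (PtC.bot_lt v c).ne'
  have hbd : (PtC.bar v d).2 ≠ ⊥ := (PtC.bot_lt v d).ne'
  have hc2 : (PtC.bar v c).2 = ((PtC.bar v c).2.toReal : EReal) := (EReal.coe_toReal ht hbc).symm
  have hd2 : (PtC.bar v d).2 = ((PtC.bar v d).2.toReal : EReal) := (EReal.coe_toReal htd hbd).symm
  have hr1 := h1.right_real hc2 hd2
  have hr2 := h2.right_real hd2 hc2
  rw [abs_sub_le_iff]
  constructor <;> linarith

lemma lseq_dist (hσ : ∀ k, IsCopyMatching (v k) (v (k+1)) ((1/2 : ℝ)^k) (σ k))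
    {c : PtC v} (hImm : PImm v σ c) (n : ℕ) :
    dist (lseq v σ c n) (lseq v σ c (n+1)) ≤ (1/2 : ℝ)^c.1 * (1/2)^n := by
  obtain ⟨d, hd⟩ := Option.isSome_iff_exists.1 (hImm n)
  obtain ⟨e, he⟩ := pimm_step_exists v σ (pimm_iter v σ hd hImm)
  have hiter : piter v σ (n+1) c = some e := by
    rw [piter_succ, hd, Option.bind_some, he]
  rw [lseq_eq v σ hd, lseq_eq v σ hiter, Real.dist_eq]
  have := pstep_left_dist v σ hσ he
  rw [piter_lvl v σ hd, pow_add] at this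
  exact this

lemma rseq_dist (hσ : ∀ k, IsCopyMatching (v k) (v (k+1)) ((1/2 : ℝ)^k) (σ k))
    {c : PtC v} (hImm : PImm v σ c) (ht : (PtC.bar v c).2 ≠ ⊤) (n : ℕ) :
    dist (rseq v σ c n) (rseq v σ c (n+1)) ≤ (1/2 : ℝ)^c.1 * (1/2)^n := by
  obtain ⟨d, hd⟩ := Option.isSome_iff_exists.1 (hImm n)
  obtain ⟨e, he⟩ := pimm_step_exists v σ (pimm_iter v σ hd hImm)
  have hiter : piter v σ (n+1) c = some e := by
    rw [piter_succ, hd, Option.bind_some, he]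
  rw [rseq_eq v σ hd, rseq_eq v σ hiter, Real.dist_eq]
  have htd : (PtC.bar v d).2 ≠ ⊤ := fun hh => ht ((piter_top_iff v σ hσ hd).2 hh)
  have := pstep_right_dist v σ hσ he htd
  rw [piter_lvl v σ hd, pow_add] at this
  exact this

lemma lseq_cauchy (hσ : ∀ k, IsCopyMatching (v k) (v (k+1)) ((1/2 : ℝ)^k) (σ k))
    {c : PtC v} (hImm : PImm v σ c) : CauchySeq (lseq v σ c) :=
  cauchySeq_of_le_geometric (1/2) ((1/2)^c.1) (by norm_num) (lseq_dist v σ hσ hImm)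

lemma rseq_cauchy (hσ : ∀ k, IsCopyMatching (v k) (v (k+1)) ((1/2 : ℝ)^k) (σ k))
    {c : PtC v} (hImm : PImm v σ c) (ht : (PtC.bar v c).2 ≠ ⊤) : CauchySeq (rseq v σ c) :=
  cauchySeq_of_le_geometric (1/2) ((1/2)^c.1) (by norm_num) (rseq_dist v σ hσ hImm ht)

/-- Limit of left endpoints. -/
noncomputable def llim (c : PtC v) : ℝ := limUnder atTop (lseq v σ c)

/-- Limit of right endpoints. -/
noncomputable def rlim (c : PtC v) : ℝ := limUnder atTop (rseq v σ c)

lemma llim_spec (hσ : ∀ k, IsCopyMatching (v k) (v (k+1)) ((1/2 : ℝ)^k) (σ k))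
    {c : PtC v} (hImm : PImm v σ c) :
    Tendsto (lseq v σ c) atTop (nhds (llim v σ c)) :=
  (lseq_cauchy v σ hσ hImm).tendsto_limUnder

lemma rlim_spec (hσ : ∀ k, IsCopyMatching (v k) (v (k+1)) ((1/2 : ℝ)^k) (σ k))
    {c : PtC v} (hImm : PImm v σ c) (ht : (PtC.bar v c).2 ≠ ⊤) :
    Tendsto (rseq v σ c) atTop (nhds (rlim v σ c)) :=
  (rseq_cauchy v σ hσ hImm ht).tendsto_limUnder

lemma llim_dist (hσ : ∀ k, IsCopyMatching (v k) (v (k+1)) ((1/2 : ℝ)^k) (σ k))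
    {c : PtC v} (hImm : PImm v σ c) :
    |(PtC.bar v c).1 - llim v σ c| ≤ 2 * (1/2 : ℝ)^c.1 := by
  have := dist_le_of_le_geometric_of_tendsto₀ (1/2) ((1/2)^c.1) (by norm_num)
    (lseq_dist v σ hσ hImm) (llim_spec v σ hσ hImm)
  rw [lseq_zero, Real.dist_eq] at this
  have heq : ((1/2 : ℝ)^c.1) / (1 - 1/2) = 2 * (1/2)^c.1 := by
    norm_num
    ring
  rwa [heq] at this

lemma rlim_dist (hσ : ∀ k, IsCopyMatching (v k) (v (k+1)) ((1/2 : ℝ)^k) (σ k))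
    {c : PtC v} (hImm : PImm v σ c) (ht : (PtC.bar v c).2 ≠ ⊤) :
    |(PtC.bar v c).2.toReal - rlim v σ c| ≤ 2 * (1/2 : ℝ)^c.1 := by
  have := dist_le_of_le_geometric_of_tendsto₀ (1/2) ((1/2)^c.1) (by norm_num)
    (rseq_dist v σ hσ hImm ht) (rlim_spec v σ hσ hImm ht)
  rw [rseq_zero, Real.dist_eq] at this
  have heq : ((1/2 : ℝ)^c.1) / (1 - 1/2) = 2 * (1/2)^c.1 := by
    norm_num
    ring
  rwa [heq] at this

/-- The limit bar of a chain. -/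
noncomputable def limbar (c : PtC v) : Bar :=
  (llim v σ c, if (PtC.bar v c).2 = ⊤ then (⊤ : EReal) else ((rlim v σ c : ℝ) : EReal))

lemma limbar_step (hσ : ∀ k, IsCopyMatching (v k) (v (k+1)) ((1/2 : ℝ)^k) (σ k))
    {c d : PtC v} (hImm : PImm v σ c) (h : pstep v σ c = some d) :
    limbar v σ d = limbar v σ c := by
  have hImmd : PImm v σ d := pimm_of_succ v σ h hImm
  have hll : llim v σ d = llim v σ c := by
    have h1 : Tendsto (lseq v σ d) atTop (nhds (llim v σ c)) := by
      have : lseq v σ d = fun n => lseq v σ c (n+1) := funext (lseq_shift v σ h)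
      rw [this]
      exact (tendsto_add_atTop_iff_nat 1).2 (llim_spec v σ hσ hImm)
    exact tendsto_nhds_unique (llim_spec v σ hσ hImmd) h1
  by_cases ht : (PtC.bar v c).2 = ⊤
  · have htd : (PtC.bar v d).2 = ⊤ := (pstep_top_iff v σ hσ h).1 ht
    simp only [limbar, ht, htd, if_true, hll]
  · have htd : (PtC.bar v d).2 ≠ ⊤ := fun hh => ht ((pstep_top_iff v σ hσ h).2 hh)
    have hrr : rlim v σ d = rlim v σ c := by
      have h1 : Tendsto (rseq v σ d) atTop (nhds (rlim v σ c)) := by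
        have : rseq v σ d = fun n => rseq v σ c (n+1) := funext (rseq_shift v σ h)
        rw [this]
        exact (tendsto_add_atTop_iff_nat 1).2 (rlim_spec v σ hσ hImm ht)
      exact tendsto_nhds_unique (rlim_spec v σ hσ hImmd htd) h1
    simp only [limbar, ht, htd, if_false, hll, hrr]

end Part5b
/-! ### Part 5c: quantitative bounds for chains -/

section Part5c

open Barcode Filter

variable (v : ℕ → Barcode) (σ : ∀ k, Cop (v k) → Option (Cop (v (k+1))))

lemma limbar_top_iff (c : PtC v) :
    (limbar v σ c).2 = ⊤ ↔ (PtC.bar v c).2 = ⊤ := by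
  by_cases ht : (PtC.bar v c).2 = ⊤
  · simp [limbar, ht]
  · have h2 : (limbar v σ c).2 = ((rlim v σ c : ℝ) : EReal) := by simp [limbar, ht]
    rw [h2]
    constructor
    · intro hh; exact absurd hh (EReal.coe_ne_top _)
    · intro hh; exact absurd hh ht

lemma bar_ne_bot (c : PtC v) : (PtC.bar v c).2 ≠ ⊥ := (PtC.bot_lt v c).ne'

lemma bar_len_real {c : PtC v} (ht : (PtC.bar v c).2 ≠ ⊤) :
    (PtC.bar v c).len = (((PtC.bar v c).2.toReal - (PtC.bar v c).1 : ℝ) : EReal) := by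
  have h2 : (PtC.bar v c).2 = (((PtC.bar v c).2.toReal : ℝ) : EReal) :=
    (EReal.coe_toReal ht (bar_ne_bot v c)).symm
  rw [Bar.len, EReal.coe_sub, ← h2]

lemma limbar_close (hσ : ∀ k, IsCopyMatching (v k) (v (k+1)) ((1/2 : ℝ)^k) (σ k))
    {c : PtC v} (hImm : PImm v σ c) :
    barSub (PtC.bar v c) (limbar v σ c) (2 * (1/2 : ℝ)^c.1) ∧
      barSub (limbar v σ c) (PtC.bar v c) (2 * (1/2 : ℝ)^c.1) := by
  have hl := llim_dist v σ hσ hImm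
  rw [abs_le] at hl
  by_cases ht : (PtC.bar v c).2 = ⊤
  · have hB2 : (limbar v σ c).2 = ⊤ := (limbar_top_iff v σ c).2 ht
    refine ⟨⟨by show llim v σ c - _ ≤ _; linarith, ?_⟩, ⟨by show _ - _ ≤ llim v σ c; linarith, ?_⟩⟩
    · rw [hB2, EReal.top_add_coe]; exact le_top
    · rw [hB2, ht, EReal.top_add_coe]
  · have hr := rlim_dist v σ hσ hImm ht
    rw [abs_le] at hr
    have hc2 : (PtC.bar v c).2 = ((PtC.bar v c).2.toReal : EReal) :=
      (EReal.coe_toReal ht (bar_ne_bot v c)).symm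
    have hB2 : (limbar v σ c).2 = ((rlim v σ c : ℝ) : EReal) := by
      simp [limbar, ht]
    refine ⟨⟨by show llim v σ c - _ ≤ _; linarith, ?_⟩, ⟨by show _ - _ ≤ llim v σ c; linarith, ?_⟩⟩
    · rw [hB2, hc2, ← EReal.coe_add, EReal.coe_le_coe_iff]; linarith
    · rw [hB2, hc2, ← EReal.coe_add, EReal.coe_le_coe_iff]; linarith

lemma len_along (hσ : ∀ k, IsCopyMatching (v k) (v (k+1)) ((1/2 : ℝ)^k) (σ k))
    {n : ℕ} {c d : PtC v} (h : piter v σ n c = some d) :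
    (PtC.bar v c).len ≤ (PtC.bar v d).len
      + (((4 * (1/2 : ℝ)^c.1 - 4 * (1/2 : ℝ)^(c.1+n)) : ℝ) : EReal) := by
  induction n generalizing c with
  | zero =>
      rw [piter_zero, Option.some_inj] at h
      subst h
      rw [show (4 * (1/2 : ℝ)^c.1 - 4 * (1/2 : ℝ)^(c.1+0) : ℝ) = 0 by norm_num,
        EReal.coe_zero, add_zero]
  | succ n ih =>
      rw [piter_succ_left] at h
      obtain ⟨e, he, hed⟩ := Option.bind_eq_some_iff.1 h
      have h1 : (PtC.bar v c).len ≤ (PtC.bar v e).len + ((2 * (1/2 : ℝ)^c.1 : ℝ) : EReal) :=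
        len_le_of_close (pstep_close v σ hσ he).1 (pstep_close v σ hσ he).2
      have h2 := ih hed
      have hlvl : e.1 = c.1 + 1 := by
        have : e.1 = c.1 + 1 := by
          obtain ⟨d', hd', rfl⟩ := Option.map_eq_some_iff.1 he
          rfl
        exact this
      rw [hlvl] at h2
      have harith : ((4 * (1/2 : ℝ)^(c.1+1) - 4 * (1/2 : ℝ)^((c.1+1)+n)) : ℝ)
          + (2 * (1/2 : ℝ)^c.1 : ℝ)
          = ((4 * (1/2 : ℝ)^c.1 - 4 * (1/2 : ℝ)^(c.1+(n+1))) : ℝ) := by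
        rw [show (c.1+1)+n = c.1+(n+1) by omega, pow_add, pow_add, pow_succ]
        ring
      calc (PtC.bar v c).len
          ≤ (PtC.bar v e).len + ((2 * (1/2 : ℝ)^c.1 : ℝ) : EReal) := h1
      _ ≤ ((PtC.bar v d).len
            + (((4 * (1/2 : ℝ)^(c.1+1) - 4 * (1/2 : ℝ)^((c.1+1)+n)) : ℝ) : EReal))
            + ((2 * (1/2 : ℝ)^c.1 : ℝ) : EReal) := add_le_add_left h2 _
      _ = (PtC.bar v d).len
            + (((4 * (1/2 : ℝ)^(c.1+1) - 4 * (1/2 : ℝ)^((c.1+1)+n))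
              + (2 * (1/2 : ℝ)^c.1) : ℝ) : EReal) := EReal.add_real_add_real _ _ _
      _ = (PtC.bar v d).len
            + (((4 * (1/2 : ℝ)^c.1 - 4 * (1/2 : ℝ)^(c.1+(n+1))) : ℝ) : EReal) := by
          rw [harith]

lemma mortal_len (hσ : ∀ k, IsCopyMatching (v k) (v (k+1)) ((1/2 : ℝ)^k) (σ k))
    {c : PtC v} (h : ¬ PImm v σ c) :
    (PtC.bar v c).len ≤ ((4 * (1/2 : ℝ)^c.1 : ℝ) : EReal) := by
  classical
  have hex : ∃ n, piter v σ n c = none := by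
    rw [PImm] at h
    push_neg at h
    obtain ⟨n, hn⟩ := h
    exact ⟨n, Option.not_isSome_iff_eq_none.1 hn⟩
  have h0 : Nat.find hex ≠ 0 := by
    intro hh
    have := Nat.find_spec hex
    rw [hh, piter_zero] at this
    cases this
  obtain ⟨m, hm⟩ := Nat.exists_eq_succ_of_ne_zero h0
  have hsome : piter v σ m c ≠ none := Nat.find_min hex (by omega)
  obtain ⟨d, hd⟩ := Option.ne_none_iff_exists'.1 hsome
  have hnone : pstep v σ d = none := by
    have := Nat.find_spec hex
    rw [hm, piter_succ, hd, Option.bind_some] at this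
    exact this
  have hld : (PtC.bar v d).len ≤ ((2 * (1/2 : ℝ)^d.1 : ℝ) : EReal) :=
    pstep_none_len v σ hσ hnone
  rw [piter_lvl v σ hd] at hld
  calc (PtC.bar v c).len
      ≤ (PtC.bar v d).len
        + (((4 * (1/2 : ℝ)^c.1 - 4 * (1/2 : ℝ)^(c.1+m)) : ℝ) : EReal) := len_along v σ hσ hd
  _ ≤ ((2 * (1/2 : ℝ)^(c.1+m) : ℝ) : EReal)
        + (((4 * (1/2 : ℝ)^c.1 - 4 * (1/2 : ℝ)^(c.1+m)) : ℝ) : EReal) := add_le_add_left hld _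
  _ = (((2 * (1/2 : ℝ)^(c.1+m)) + (4 * (1/2 : ℝ)^c.1 - 4 * (1/2 : ℝ)^(c.1+m)) : ℝ) : EReal) := by
        rw [← EReal.coe_add]
  _ ≤ ((4 * (1/2 : ℝ)^c.1 : ℝ) : EReal) := by
        rw [EReal.coe_le_coe_iff]
        have : (0:ℝ) < (1/2 : ℝ)^(c.1+m) := by positivity
        linarith

lemma invalid_len (hσ : ∀ k, IsCopyMatching (v k) (v (k+1)) ((1/2 : ℝ)^k) (σ k))
    {c : PtC v} (hImm : PImm v σ c) (hinv : ¬ (limbar v σ c).IsValid) :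
    (PtC.bar v c).len ≤ ((4 * (1/2 : ℝ)^c.1 : ℝ) : EReal) := by
  by_cases ht : (PtC.bar v c).2 = ⊤
  · exfalso
    apply hinv
    show ((limbar v σ c).1 : EReal) < (limbar v σ c).2
    rw [(limbar_top_iff v σ c).2 ht]
    exact EReal.coe_lt_top _
  · have hB2 : (limbar v σ c).2 = ((rlim v σ c : ℝ) : EReal) := by simp [limbar, ht]
    have hrl : rlim v σ c ≤ llim v σ c := by
      by_contra hcon
      push_neg at hcon
      exact hinv (by
        show ((limbar v σ c).1 : EReal) < (limbar v σ c).2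
        rw [hB2]
        exact EReal.coe_lt_coe_iff.2 hcon)
    have hl := llim_dist v σ hσ hImm
    have hr := rlim_dist v σ hσ hImm ht
    rw [abs_le] at hl hr
    rw [bar_len_real v ht, EReal.coe_le_coe_iff]
    linarith

lemma limbar_len_le (hσ : ∀ k, IsCopyMatching (v k) (v (k+1)) ((1/2 : ℝ)^k) (σ k))
    {c : PtC v} (hImm : PImm v σ c) :
    (limbar v σ c).len ≤ (PtC.bar v c).len + ((4 * (1/2 : ℝ)^c.1 : ℝ) : EReal) := by
  by_cases ht : (PtC.bar v c).2 = ⊤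
  · have h1 : (PtC.bar v c).len = ⊤ := by rw [Bar.len, ht]; exact EReal.top_sub_coe _
    rw [h1, EReal.top_add_coe]
    exact le_top
  · have hB2 : (limbar v σ c).2 = ((rlim v σ c : ℝ) : EReal) := by simp [limbar, ht]
    have hlen : (limbar v σ c).len = ((rlim v σ c - llim v σ c : ℝ) : EReal) := by
      rw [Bar.len, hB2, ← EReal.coe_sub]
      rfl
    have hl := llim_dist v σ hσ hImm
    have hr := rlim_dist v σ hσ hImm ht
    rw [abs_le] at hl hr
    rw [hlen, bar_len_real v ht, ← EReal.coe_add, EReal.coe_le_coe_iff]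
    linarith

end Part5c
/-! ### Part 5d: chain sets, stabilization, the limit barcode -/

section Part5d

open Barcode Filter

variable (v : ℕ → Barcode) (σ : ∀ k, Cop (v k) → Option (Cop (v (k+1))))

lemma pstep_lvl {c d : PtC v} (h : pstep v σ c = some d) : d.1 = c.1 + 1 := by
  obtain ⟨d', hd', rfl⟩ := Option.map_eq_some_iff.1 h
  rfl

lemma pstep_inj (hσ : ∀ k, IsCopyMatching (v k) (v (k+1)) ((1/2 : ℝ)^k) (σ k))
    {c c' d : PtC v} (hlvl : c.1 = c'.1) (h : pstep v σ c = some d)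
    (h' : pstep v σ c' = some d) : c = c' := by
  obtain ⟨k, x⟩ := c
  obtain ⟨k', x'⟩ := c'
  simp only at hlvl
  subst hlvl
  obtain ⟨e, he, rfl⟩ := Option.map_eq_some_iff.1 h
  obtain ⟨e', he', heq'⟩ := Option.map_eq_some_iff.1 h'
  injection heq' with h1 h2
  subst h2
  rw [(hσ k).1 x x' e' he he']

/-- The set of immortal chains at level `k` with limit bar `B`. -/
def Ch (k : ℕ) (B : Bar) : Set (PtC v) :=
  {c | c.1 = k ∧ PImm v σ c ∧ limbar v σ c = B}

/-- Level-`k` copies with bars in a finite set form a finite set. -/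
lemma ptc_level_finite (k : ℕ) {S : Set Bar} (hS : S.Finite) :
    {c : PtC v | c.1 = k ∧ PtC.bar v c ∈ S}.Finite := by
  apply Set.Finite.of_finite_image (f := fun c : PtC v => c.2.1)
  · apply Set.Finite.subset
      (Set.Finite.biUnion hS (fun I _ => copiesSet_finite I ((v k).mult I)))
    rintro q ⟨c, hc, rfl⟩
    obtain ⟨k', x⟩ := c
    obtain ⟨hk, hbar⟩ := hc
    simp only at hk
    subst hk
    exact Set.mem_biUnion hbar ⟨rfl, x.2⟩
  · rintro ⟨k1, x⟩ ⟨hk1, _⟩ ⟨k2, x'⟩ ⟨hk2, _⟩ hx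
    simp only at hk1 hk2 hx
    subst hk1
    subst hk2
    rw [Subtype.ext hx]

lemma EReal.coe_le_of_le_add {x : EReal} {a b : ℝ} (h : (a : EReal) ≤ x + (b : EReal)) :
    ((a - b : ℝ) : EReal) ≤ x := by
  calc ((a - b : ℝ) : EReal) = (a : EReal) - (b : EReal) := EReal.coe_sub _ _
  _ ≤ (x + (b : EReal)) - (b : EReal) := EReal.sub_le_sub h le_rfl
  _ = x := EReal.add_sub_cancel_right

lemma ch_finite (hσ : ∀ k, IsCopyMatching (v k) (v (k+1)) ((1/2 : ℝ)^k) (σ k))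
    (hv : ∀ k, (v k).QTame) (k : ℕ) {B : Bar} (hB : B.IsValid) :
    (Ch v σ k B).Finite := by
  classical
  by_cases htop : B.2 = ⊤
  · apply (ptc_level_finite v k
      (S := {I | (v k).mult I ≠ 0 ∧ ((1:ℝ) : EReal) ≤ I.len}) (hv k 1 one_pos)).subset
    rintro c ⟨hk, hImm, hlim⟩
    have hct : (PtC.bar v c).2 = ⊤ := by
      rw [← limbar_top_iff v σ c, hlim, htop]
    have hlen : (PtC.bar v c).len = ⊤ := by
      rw [Bar.len, hct]
      exact EReal.top_sub_coe _
    refine ⟨hk, ?_, by rw [hlen]; exact le_top⟩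
    rw [← hk]
    exact Nat.ne_zero_of_lt c.2.2
  · -- B has finite right endpoint
    have hbot : B.2 ≠ ⊥ := fun hh => absurd hB (by
      rw [Bar.IsValid, hh]; exact not_lt_bot)
    set r := B.2.toReal with hr
    have hB2 : B.2 = (r : EReal) := (EReal.coe_toReal htop hbot).symm
    set ℓ : ℝ := r - B.1 with hℓ
    have hℓpos : 0 < ℓ := by
      have : (B.1 : EReal) < (r : EReal) := hB2 ▸ hB
      have := EReal.coe_lt_coe_iff.1 this
      simp only [hℓ]
      linarith
    have hBlen : B.len = ((ℓ : ℝ) : EReal) := by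
      rw [Bar.len, hB2, ← EReal.coe_sub]
    obtain ⟨n₀, hn₀⟩ := exists_pow_lt_of_lt_one (by positivity : (0:ℝ) < ℓ/8)
      (by norm_num : (1/2 : ℝ) < 1)
    set l₀ := max k n₀ with hl₀
    have hpow : 4 * (1/2 : ℝ)^l₀ ≤ ℓ/2 := by
      have h1 : (1/2 : ℝ)^l₀ ≤ (1/2)^n₀ :=
        pow_le_pow_of_le_one (by norm_num) (by norm_num) (le_max_right _ _)
      nlinarith
    -- chains at level l₀ have long bars
    have hsub : Ch v σ l₀ B ⊆
        {c : PtC v | c.1 = l₀ ∧ PtC.bar v c ∈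
          {I | (v l₀).mult I ≠ 0 ∧ ((ℓ/2 : ℝ) : EReal) ≤ I.len}} := by
      rintro c ⟨hk, hImm, hlim⟩
      refine ⟨hk, ?_, ?_⟩
      · rw [← hk]
        exact Nat.ne_zero_of_lt c.2.2
      · have h1 := limbar_len_le v σ hσ hImm
        rw [hlim, hBlen, hk] at h1
        have h2 := EReal.coe_le_of_le_add h1
        refine le_trans ?_ h2
        rw [EReal.coe_le_coe_iff]
        linarith
    have hfin₀ : (Ch v σ l₀ B).Finite :=
      ((ptc_level_finite v l₀ (hv l₀ (ℓ/2) (by positivity))).subset hsub)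
    -- map `Ch k B` into `Ch l₀ B` by iterating
    have hmap : ∀ c, ∃ d, c ∈ Ch v σ k B →
        (piter v σ (l₀ - k) c = some d ∧ d ∈ Ch v σ l₀ B) := by
      intro c
      by_cases hcmem : c ∈ Ch v σ k B
      swap
      · exact ⟨c, fun h => absurd h hcmem⟩
      obtain ⟨hk, hImm, hlim⟩ := hcmem
      obtain ⟨d, hd⟩ := Option.isSome_iff_exists.1 (hImm (l₀ - k))
      refine ⟨d, fun _ => ⟨hd, ?_, pimm_iter v σ hd hImm, ?_⟩⟩
      · rw [piter_lvl v σ hd, hk]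
        omega
      · -- limbar d = B: iterate limbar_step
        have : ∀ (n : ℕ) (c d : PtC v), PImm v σ c → piter v σ n c = some d →
            limbar v σ d = limbar v σ c := by
          intro n
          induction n with
          | zero =>
              intro c d _ h
              rw [piter_zero, Option.some_inj] at h
              rw [h]
          | succ n ih =>
              intro c d hI h
              rw [piter_succ_left] at h
              obtain ⟨e, he, hed⟩ := Option.bind_eq_some_iff.1 h
              rw [ih e d (pimm_of_succ v σ he hI) hed, limbar_step v σ hσ hI he]
        rw [this (l₀ - k) c d hImm hd, hlim]
    choose f hf using hmap
    apply Set.Finite.of_finite_image (f := f) (hfin₀.subset ?_)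
    · -- injectivity
      intro c hc c' hc' hcc
      have h1 := (hf c hc).1
      have h2 := (hf c' hc').1
      rw [hcc] at h1
      -- piter injectivity
      have hiter_inj : ∀ (n : ℕ) (c c' d : PtC v), c.1 = c'.1 →
          piter v σ n c = some d → piter v σ n c' = some d → c = c' := by
        intro n
        induction n with
        | zero =>
            intro c c' d _ h h'
            rw [piter_zero, Option.some_inj] at h h'
            rw [h, h']
        | succ n ih =>
            intro c c' d hlvl h h'
            rw [piter_succ_left] at h h'
            obtain ⟨e, he, hed⟩ := Option.bind_eq_some_iff.1 h
            obtain ⟨e', he', hed'⟩ := Option.bind_eq_some_iff.1 h'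
            have hee : e.1 = e'.1 := by
              rw [pstep_lvl v σ he, pstep_lvl v σ he', hlvl]
            have : e = e' := ih e e' d hee hed hed'
            subst this
            exact pstep_inj v σ hσ hlvl he he'
      exact hiter_inj (l₀ - k) c c' (f c') (by rw [hc.1, hc'.1]) h1 h2
    · rintro q ⟨c, hc, rfl⟩
      exact (hf c hc).2

end Part5d
/-! ### Part 5e: multiplicities of the limit barcode -/

section Part5e

open Barcode Filter

variable (v : ℕ → Barcode) (σ : ∀ k, Cop (v k) → Option (Cop (v (k+1))))

lemma limbar_iter (hσ : ∀ k, IsCopyMatching (v k) (v (k+1)) ((1/2 : ℝ)^k) (σ k))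
    {n : ℕ} {c d : PtC v} (hImm : PImm v σ c) (h : piter v σ n c = some d) :
    limbar v σ d = limbar v σ c := by
  induction n generalizing c with
  | zero =>
      rw [piter_zero, Option.some_inj] at h
      rw [h]
  | succ n ih =>
      rw [piter_succ_left] at h
      obtain ⟨e, he, hed⟩ := Option.bind_eq_some_iff.1 h
      rw [ih (pimm_of_succ v σ he hImm) hed, limbar_step v σ hσ hImm he]

lemma piter_inj (hσ : ∀ k, IsCopyMatching (v k) (v (k+1)) ((1/2 : ℝ)^k) (σ k))
    {n : ℕ} {c c' d : PtC v} (hlvl : c.1 = c'.1)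
    (h : piter v σ n c = some d) (h' : piter v σ n c' = some d) : c = c' := by
  induction n generalizing c c' with
  | zero =>
      rw [piter_zero, Option.some_inj] at h h'
      rw [h, h']
  | succ n ih =>
      rw [piter_succ_left] at h h'
      obtain ⟨e, he, hed⟩ := Option.bind_eq_some_iff.1 h
      obtain ⟨e', he', hed'⟩ := Option.bind_eq_some_iff.1 h'
      have hee : e.1 = e'.1 := by
        rw [pstep_lvl v σ he, pstep_lvl v σ he', hlvl]
      have : e = e' := ih hee hed hed'
      subst this
      exact pstep_inj v σ hσ hlvl he he'

/-- The number of chains at level `k` with limit `B`. -/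
noncomputable def Nch (k : ℕ) (B : Bar) : ℕ := (Ch v σ k B).ncard

/-- The successor map on chains. -/
noncomputable def nxt (c : PtC v) : PtC v := (pstep v σ c).getD c

lemma nxt_eq {c d : PtC v} (h : pstep v σ c = some d) : nxt v σ c = d := by
  rw [nxt, h]
  rfl

lemma nxt_mapsTo (hσ : ∀ k, IsCopyMatching (v k) (v (k+1)) ((1/2 : ℝ)^k) (σ k))
    {k : ℕ} {B : Bar} :
    Set.MapsTo (nxt v σ) (Ch v σ k B) (Ch v σ (k+1) B) := by
  rintro c ⟨hk, hImm, hlim⟩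
  obtain ⟨d, hd⟩ := pimm_step_exists v σ hImm
  rw [nxt_eq v σ hd]
  exact ⟨by rw [pstep_lvl v σ hd, hk], pimm_of_succ v σ hd hImm,
    by rw [limbar_step v σ hσ hImm hd, hlim]⟩

lemma nxt_injOn (hσ : ∀ k, IsCopyMatching (v k) (v (k+1)) ((1/2 : ℝ)^k) (σ k))
    {k : ℕ} {B : Bar} : Set.InjOn (nxt v σ) (Ch v σ k B) := by
  rintro c ⟨hk, hImm, _⟩ c' ⟨hk', hImm', _⟩ hcc
  obtain ⟨d, hd⟩ := pimm_step_exists v σ hImm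
  obtain ⟨d', hd'⟩ := pimm_step_exists v σ hImm'
  rw [nxt_eq v σ hd, nxt_eq v σ hd'] at hcc
  subst hcc
  exact pstep_inj v σ hσ (by rw [hk, hk']) hd hd'

lemma nch_mono (hσ : ∀ k, IsCopyMatching (v k) (v (k+1)) ((1/2 : ℝ)^k) (σ k))
    (hv : ∀ k, (v k).QTame) {B : Bar} (hB : B.IsValid) {k l : ℕ} (hkl : k ≤ l) :
    Nch v σ k B ≤ Nch v σ l B := by
  induction l with
  | zero =>
      have : k = 0 := by omega
      subst this
      exact le_rfl
  | succ l ih =>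
      rcases Nat.lt_or_ge k (l+1) with h | h
      · have hkl' : k ≤ l := by omega
        refine (ih hkl').trans ?_
        exact Set.ncard_le_ncard_of_injOn (nxt v σ) (nxt_mapsTo v σ hσ) (nxt_injOn v σ hσ)
          (ch_finite v σ hσ hv (l+1) hB)
      · have : k = l + 1 := by omega
        subst this
        exact le_rfl

lemma no_new (hσ : ∀ k, IsCopyMatching (v k) (v (k+1)) ((1/2 : ℝ)^k) (σ k))
    {k : ℕ} {B : Bar}
    (hlen : ((4 * (1/2 : ℝ)^k : ℝ) : EReal) < B.len) :
    Ch v σ (k+1) B ⊆ (nxt v σ) '' (Ch v σ k B) := by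
  rintro d ⟨hk, hImm, hlim⟩
  obtain ⟨l, d₂⟩ := d
  simp only at hk
  subst hk
  -- find a predecessor
  by_cases hpre : ∃ c₂ : Cop (v k), σ k c₂ = some d₂
  · obtain ⟨c₂, hc₂⟩ := hpre
    have hstep : pstep v σ ⟨k, c₂⟩ = some ⟨k+1, d₂⟩ := by
      show Option.map _ (σ k c₂) = _; rw [hc₂]
      rfl
    have hImmc : PImm v σ ⟨k, c₂⟩ := pimm_succ v σ hstep hImm
    refine ⟨⟨k, c₂⟩, ⟨rfl, hImmc, ?_⟩, nxt_eq v σ hstep⟩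
    rw [← limbar_step v σ hσ hImmc hstep, hlim]
  · exfalso
    push_neg at hpre
    have hdel : (Cop.bar d₂).len ≤ ((2 * (1/2 : ℝ)^k : ℝ) : EReal) :=
      (hσ k).2.2.1 d₂ hpre
    have hlle := limbar_len_le v σ hσ (c := ⟨k+1, d₂⟩) hImm
    rw [hlim] at hlle
    have : B.len ≤ ((4 * (1/2 : ℝ)^k : ℝ) : EReal) := by
      calc B.len ≤ (PtC.bar v ⟨k+1, d₂⟩).len + ((4 * (1/2 : ℝ)^(k+1) : ℝ) : EReal) := hlle
      _ ≤ ((2 * (1/2 : ℝ)^k : ℝ) : EReal) + ((4 * (1/2 : ℝ)^(k+1) : ℝ) : EReal) :=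
          add_le_add_left hdel _
      _ = ((2 * (1/2 : ℝ)^k + 4 * (1/2 : ℝ)^(k+1) : ℝ) : EReal) := by rw [← EReal.coe_add]
      _ = ((4 * (1/2 : ℝ)^k : ℝ) : EReal) := by
          rw [EReal.coe_eq_coe_iff, pow_succ]
          ring
    exact absurd (lt_of_lt_of_le hlen this) (lt_irrefl _)
  
lemma nch_succ_eq (hσ : ∀ k, IsCopyMatching (v k) (v (k+1)) ((1/2 : ℝ)^k) (σ k))
    (hv : ∀ k, (v k).QTame) {k : ℕ} {B : Bar} (hB : B.IsValid)
    (hlen : ((4 * (1/2 : ℝ)^k : ℝ) : EReal) < B.len) :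
    Nch v σ (k+1) B = Nch v σ k B := by
  apply le_antisymm
  · calc Nch v σ (k+1) B ≤ ((nxt v σ) '' (Ch v σ k B)).ncard :=
        Set.ncard_le_ncard (no_new v σ hσ hlen)
          ((ch_finite v σ hσ hv k hB).image _)
    _ = Nch v σ k B := Set.ncard_image_of_injOn (nxt_injOn v σ hσ)
  · exact nch_mono v σ hσ hv hB (Nat.le_succ k)

lemma nch_stab (hσ : ∀ k, IsCopyMatching (v k) (v (k+1)) ((1/2 : ℝ)^k) (σ k))
    (hv : ∀ k, (v k).QTame) {k l : ℕ} {B : Bar} (hB : B.IsValid) (hkl : k ≤ l)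
    (hlen : ((4 * (1/2 : ℝ)^k : ℝ) : EReal) < B.len) :
    Nch v σ l B = Nch v σ k B := by
  induction l with
  | zero =>
      have : k = 0 := by omega
      subst this
      rfl
  | succ l ih =>
      rcases Nat.lt_or_ge k (l+1) with h | h
      · have hkl' : k ≤ l := by omega
        rw [← ih hkl']
        apply nch_succ_eq v σ hσ hv hB
        refine lt_of_le_of_lt (EReal.coe_le_coe_iff.2 ?_) hlen
        have : (1/2:ℝ)^l ≤ (1/2)^k := pow_le_pow_of_le_one (by norm_num) (by norm_num) hkl'
        linarith
      · have : k = l + 1 := by omega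
        subst this
        rfl

end Part5e
/-! ### Part 5f: the limit barcode and its tameness -/

section Part5f

open Barcode Filter

variable (v : ℕ → Barcode) (σ : ∀ k, Cop (v k) → Option (Cop (v (k+1))))

lemma exists_threshold {B : Bar} (hB : B.IsValid) :
    ∃ k : ℕ, ((4 * (1/2 : ℝ)^k : ℝ) : EReal) < B.len := by
  by_cases ht : B.2 = ⊤
  · refine ⟨0, ?_⟩
    rw [Bar.len, ht, EReal.top_sub_coe]
    exact EReal.coe_lt_top _
  · have hbot : B.2 ≠ ⊥ := fun hh => absurd hB (by rw [Bar.IsValid, hh]; exact not_lt_bot)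
    have hB2 : B.2 = (B.2.toReal : EReal) := (EReal.coe_toReal ht hbot).symm
    set ℓ : ℝ := B.2.toReal - B.1 with hℓ
    have hℓpos : 0 < ℓ := by
      have : (B.1 : EReal) < (B.2.toReal : EReal) := hB2 ▸ hB
      have := EReal.coe_lt_coe_iff.1 this
      simp only [hℓ]
      linarith
    have hBlen : B.len = ((ℓ : ℝ) : EReal) := by rw [Bar.len, hB2, ← EReal.coe_sub]
    obtain ⟨n₀, hn₀⟩ := exists_pow_lt_of_lt_one (by positivity : (0:ℝ) < ℓ/4)
      (by norm_num : (1/2 : ℝ) < 1)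
    refine ⟨n₀, ?_⟩
    rw [hBlen, EReal.coe_lt_coe_iff]
    linarith

/-- Multiplicity function of the limit barcode. -/
noncomputable def Lmult (B : Bar) : ℕ :=
  if h : B.IsValid ∧ ∃ k : ℕ, ((4 * (1/2 : ℝ)^k : ℝ) : EReal) < B.len
  then Nch v σ h.2.choose B else 0

lemma Lmult_eq (hσ : ∀ k, IsCopyMatching (v k) (v (k+1)) ((1/2 : ℝ)^k) (σ k))
    (hv : ∀ k, (v k).QTame) {B : Bar} (hB : B.IsValid) {k : ℕ}
    (hk : ((4 * (1/2 : ℝ)^k : ℝ) : EReal) < B.len) :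
    Lmult v σ B = Nch v σ k B := by
  have hcond : B.IsValid ∧ ∃ k : ℕ, ((4 * (1/2 : ℝ)^k : ℝ) : EReal) < B.len := ⟨hB, k, hk⟩
  rw [Lmult, dif_pos hcond]
  have hk₀ := hcond.2.choose_spec
  calc Nch v σ hcond.2.choose B
      = Nch v σ (max hcond.2.choose k) B :=
        (nch_stab v σ hσ hv hB (le_max_left _ _) hk₀).symm
  _ = Nch v σ k B := nch_stab v σ hσ hv hB (le_max_right _ _) hk

lemma nch_le_Lmult (hσ : ∀ k, IsCopyMatching (v k) (v (k+1)) ((1/2 : ℝ)^k) (σ k))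
    (hv : ∀ k, (v k).QTame) {B : Bar} (hB : B.IsValid) (k : ℕ) :
    Nch v σ k B ≤ Lmult v σ B := by
  obtain ⟨k₁, hk₁⟩ := exists_threshold hB
  calc Nch v σ k B ≤ Nch v σ (max k k₁) B := nch_mono v σ hσ hv hB (le_max_left _ _)
  _ = Nch v σ k₁ B := nch_stab v σ hσ hv hB (le_max_right _ _) hk₁
  _ = Lmult v σ B := (Lmult_eq v σ hσ hv hB hk₁).symm

lemma Lmult_valid {B : Bar} (h : Lmult v σ B ≠ 0) : B.IsValid := by
  by_cases hc : B.IsValid ∧ ∃ k : ℕ, ((4 * (1/2 : ℝ)^k : ℝ) : EReal) < B.len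
  · exact hc.1
  · rw [Lmult, dif_neg hc] at h
    exact absurd rfl h

/-- The limit barcode. -/
noncomputable def Lbc : Barcode := ⟨Lmult v σ, fun _ h => Lmult_valid v σ h⟩

lemma Lbc_qtame (hσ : ∀ k, IsCopyMatching (v k) (v (k+1)) ((1/2 : ℝ)^k) (σ k))
    (hv : ∀ k, (v k).QTame) : (Lbc v σ).QTame := by
  classical
  intro ε hε
  obtain ⟨n₀, hn₀⟩ := exists_pow_lt_of_lt_one (by positivity : (0:ℝ) < ε/8)
    (by norm_num : (1/2 : ℝ) < 1)
  have hthr : (4 * (1/2 : ℝ)^n₀) < ε/2 := by linarith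
  set T : Set (PtC v) := {c : PtC v | c.1 = n₀ ∧ PtC.bar v c ∈
    {I | (v n₀).mult I ≠ 0 ∧ ((ε/2 : ℝ) : EReal) ≤ I.len}} with hT
  have hTfin : T.Finite := ptc_level_finite v n₀ (hv n₀ (ε/2) (by positivity))
  set g : Bar → Option (PtC v) := fun B =>
    if h : (Ch v σ n₀ B).Nonempty then some h.choose else none with hg
  have hmem : ∀ B ∈ {B : Bar | (Lbc v σ).mult B ≠ 0 ∧ (ε : EReal) ≤ B.len},
      ∃ c, g B = some c ∧ c ∈ Ch v σ n₀ B := by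
    rintro B ⟨hm, hlB⟩
    have hB : B.IsValid := Lmult_valid v σ hm
    have hthr' : ((4 * (1/2 : ℝ)^n₀ : ℝ) : EReal) < B.len :=
      lt_of_lt_of_le (EReal.coe_lt_coe_iff.2 (by linarith)) hlB
    have hne : (Ch v σ n₀ B).Nonempty := by
      apply Set.nonempty_of_ncard_ne_zero
      show Nch v σ n₀ B ≠ 0
      rw [← Lmult_eq v σ hσ hv hB hthr']
      exact hm
    exact ⟨hne.choose, by rw [hg]; simp only [dif_pos hne], hne.choose_spec⟩
  apply Set.Finite.of_finite_image (f := g)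
  · apply Set.Finite.subset (Set.Finite.insert none (hTfin.image some))
    rintro x ⟨B, hB, rfl⟩
    obtain ⟨c, hc, hcCh⟩ := hmem B hB
    rw [hc]
    right
    refine ⟨c, ?_, rfl⟩
    obtain ⟨hk, hImm, hlim⟩ := hcCh
    refine ⟨hk, ?_, ?_⟩
    · rw [← hk]
      exact Nat.ne_zero_of_lt c.2.2
    · have h1 := limbar_len_le v σ hσ hImm
      rw [hlim, hk] at h1
      have h2 := EReal.coe_le_of_le_add (le_trans hB.2 h1)
      refine le_trans ?_ h2
      rw [EReal.coe_le_coe_iff]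
      linarith
  · intro B hB B' hB' hgg
    obtain ⟨c, hc, hcCh⟩ := hmem B hB
    obtain ⟨c', hc', hcCh'⟩ := hmem B' hB'
    rw [hc, hc'] at hgg
    have : c = c' := Option.some_inj.1 hgg
    subst this
    rw [← hcCh.2.2, ← hcCh'.2.2]

end Part5f
/-! ### Part 5g: the limit matching -/

section Part5g

open Barcode Filter

variable (v : ℕ → Barcode) (σ : ∀ k, Cop (v k) → Option (Cop (v (k+1))))

/-- Limit bar of a copy (with junk default). -/
noncomputable def fbar (k : ℕ) (q : Bar × ℕ) : Bar :=
  if h : q.2 < (v k).mult q.1 then limbar v σ ⟨k, ⟨q, h⟩⟩ else ((0 : ℝ), (⊥ : EReal))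

/-- Copies of `I` at level `k` with a valid limit. -/
def sA (k : ℕ) (I : Bar) : Set (Bar × ℕ) :=
  {q | q.1 = I ∧ ∃ h : q.2 < (v k).mult q.1,
    PImm v σ ⟨k, ⟨q, h⟩⟩ ∧ (limbar v σ ⟨k, ⟨q, h⟩⟩).IsValid}

/-- Copies at level `k` with limit `B`. -/
def tB (k : ℕ) (B : Bar) : Set (Bar × ℕ) :=
  {q | ∃ h : q.2 < (v k).mult q.1, PImm v σ ⟨k, ⟨q, h⟩⟩ ∧ limbar v σ ⟨k, ⟨q, h⟩⟩ = B}

lemma sA_subset (k : ℕ) (I : Bar) : sA v σ k I ⊆ copiesSet I ((v k).mult I) := by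
  rintro q ⟨h1, h2, _⟩
  exact ⟨h1, by rwa [h1] at h2⟩

lemma sA_finite (k : ℕ) (I : Bar) : (sA v σ k I).Finite :=
  (copiesSet_finite I ((v k).mult I)).subset (sA_subset v σ k I)

lemma mem_sA_fiber {k : ℕ} {I B : Bar} {q : Bar × ℕ} :
    q ∈ sA v σ k I ∩ fbar v σ k ⁻¹' {B} ↔
      q.1 = I ∧ ∃ h : q.2 < (v k).mult q.1,
        PImm v σ ⟨k, ⟨q, h⟩⟩ ∧ (limbar v σ ⟨k, ⟨q, h⟩⟩).IsValid ∧
          limbar v σ ⟨k, ⟨q, h⟩⟩ = B := by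
  constructor
  · rintro ⟨⟨h1, h, hImm, hval⟩, hpre⟩
    rw [Set.mem_preimage, Set.mem_singleton_iff, fbar, dif_pos h] at hpre
    exact ⟨h1, h, hImm, hval, hpre⟩
  · rintro ⟨h1, h, hImm, hval, hlim⟩
    refine ⟨⟨h1, h, hImm, hval⟩, ?_⟩
    rw [Set.mem_preimage, Set.mem_singleton_iff, fbar, dif_pos h]
    exact hlim

lemma tB_eq_image {k : ℕ} {B : Bar} :
    tB v σ k B = (fun c : PtC v => c.2.1) '' Ch v σ k B := by
  ext q
  constructor
  · rintro ⟨h, hImm, hlim⟩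
    exact ⟨⟨k, ⟨q, h⟩⟩, ⟨rfl, hImm, hlim⟩, rfl⟩
  · rintro ⟨c, ⟨hk, hImm, hlim⟩, rfl⟩
    obtain ⟨k', x⟩ := c
    simp only at hk
    subst hk
    exact ⟨x.2, hImm, hlim⟩

lemma tB_ncard (hσ : ∀ k, IsCopyMatching (v k) (v (k+1)) ((1/2 : ℝ)^k) (σ k))
    {k : ℕ} {B : Bar} : (tB v σ k B).ncard = Nch v σ k B := by
  rw [tB_eq_image]
  apply Set.ncard_image_of_injOn
  rintro ⟨k1, x⟩ ⟨hk1, _⟩ ⟨k2, x'⟩ ⟨hk2, _⟩ hx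
  simp only at hk1 hk2 hx
  subst hk1
  subst hk2
  rw [Subtype.ext hx]

lemma tB_finite (hσ : ∀ k, IsCopyMatching (v k) (v (k+1)) ((1/2 : ℝ)^k) (σ k))
    (hv : ∀ k, (v k).QTame) {k : ℕ} {B : Bar} (hB : B.IsValid) : (tB v σ k B).Finite := by
  rw [tB_eq_image]
  exact (ch_finite v σ hσ hv k hB).image _

lemma sA_fiber_eq_tB {k : ℕ} {B : Bar} (hB : B.IsValid) (I : Bar) :
    sA v σ k I ∩ fbar v σ k ⁻¹' {B}
      = tB v σ k B ∩ (fun q : Bar × ℕ => q.1) ⁻¹' {I} := by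
  ext q
  rw [mem_sA_fiber]
  constructor
  · rintro ⟨h1, h, hImm, _, hlim⟩
    exact ⟨⟨h, hImm, hlim⟩, by rwa [Set.mem_preimage, Set.mem_singleton_iff]⟩
  · rintro ⟨⟨h, hImm, hlim⟩, hq⟩
    rw [Set.mem_preimage, Set.mem_singleton_iff] at hq
    exact ⟨hq, h, hImm, by rw [hlim]; exact hB, hlim⟩

/-- The limit matching: `HasMatching (v k) (Lbc v σ) (2 (1/2)^k)`. -/
lemma matching_to_Lbc (hσ : ∀ k, IsCopyMatching (v k) (v (k+1)) ((1/2 : ℝ)^k) (σ k))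
    (hv : ∀ k, (v k).QTame) (k : ℕ) :
    HasMatching (v k) (Lbc v σ) (2 * (1/2 : ℝ)^k) := by
  classical
  have hcoe : ((2 * (2 * (1/2 : ℝ)^k) : ℝ) : EReal) = ((4 * (1/2 : ℝ)^k : ℝ) : EReal) := by
    rw [EReal.coe_eq_coe_iff]; ring
  refine ⟨fun I B => (sA v σ k I ∩ fbar v σ k ⁻¹' {B}).ncard, ?_, ?_, ?_, ?_, ?_, ?_, ?_⟩
  · -- row finiteness
    intro I
    apply ((sA_finite v σ k I).image (fbar v σ k)).subset
    intro B hB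
    obtain ⟨q, hq⟩ := Set.nonempty_of_ncard_ne_zero hB
    exact ⟨q, hq.1, by
      have := hq.2
      rwa [Set.mem_preimage, Set.mem_singleton_iff] at this⟩
  · -- column finiteness
    intro B
    by_cases hB : B.IsValid
    · apply (((tB_finite v σ hσ hv hB).image (fun q : Bar × ℕ => q.1))).subset
      intro I hI
      obtain ⟨q, hq⟩ := Set.nonempty_of_ncard_ne_zero hI
      rw [mem_sA_fiber] at hq
      obtain ⟨h1, h, hImm, _, hlim⟩ := hq
      exact ⟨q, ⟨h, hImm, hlim⟩, h1⟩
    · have : {I | (sA v σ k I ∩ fbar v σ k ⁻¹' {B}).ncard ≠ 0} = ∅ := by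
        ext I
        simp only [Set.mem_setOf_eq, Set.mem_empty_iff_false, iff_false, not_not]
        have : sA v σ k I ∩ fbar v σ k ⁻¹' {B} = ∅ := by
          ext q
          rw [mem_sA_fiber]
          simp only [Set.mem_empty_iff_false, iff_false]
          rintro ⟨h1, h, hImm, hval, hlim⟩
          exact hB (hlim ▸ hval)
        rw [this, Set.ncard_empty]
      rw [this]
      exact Set.finite_empty
  · -- row sums
    intro I
    rw [ncard_fiber_finsum (sA_finite v σ k I) (fbar v σ k)]
    calc (sA v σ k I).ncard ≤ (copiesSet I ((v k).mult I)).ncard :=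
          Set.ncard_le_ncard (sA_subset v σ k I) (copiesSet_finite _ _)
    _ = (v k).mult I := copiesSet_ncard _ _
  · -- column sums
    intro B
    by_cases hB : B.IsValid
    · have hsum : (∑ᶠ I, (sA v σ k I ∩ fbar v σ k ⁻¹' {B}).ncard)
          = (tB v σ k B).ncard := by
        rw [← ncard_fiber_finsum (tB_finite v σ hσ hv hB) (fun q : Bar × ℕ => q.1)]
        exact finsum_congr fun I => by rw [sA_fiber_eq_tB v σ hB I]
      rw [hsum, tB_ncard v σ hσ]
      exact nch_le_Lmult v σ hσ hv hB k
    · have hz : ∀ I, (sA v σ k I ∩ fbar v σ k ⁻¹' {B}).ncard = 0 := by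
        intro I
        have : sA v σ k I ∩ fbar v σ k ⁻¹' {B} = ∅ := by
          ext q
          rw [mem_sA_fiber]
          simp only [Set.mem_empty_iff_false, iff_false]
          rintro ⟨h1, h, hImm, hval, hlim⟩
          exact hB (hlim ▸ hval)
        rw [this, Set.ncard_empty]
      calc (∑ᶠ I, (sA v σ k I ∩ fbar v σ k ⁻¹' {B}).ncard) = ∑ᶠ I : Bar, 0 :=
            finsum_congr hz
      _ = 0 := finsum_zero
      _ ≤ (Lbc v σ).mult B := Nat.zero_le _
  · -- row deletion
    intro I hlt
    rw [ncard_fiber_finsum (sA_finite v σ k I) (fbar v σ k)] at hlt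
    have hne : sA v σ k I ≠ copiesSet I ((v k).mult I) := by
      intro heq
      rw [heq, copiesSet_ncard] at hlt
      exact lt_irrefl _ hlt
    obtain ⟨q, hqc, hqn⟩ : ∃ q, q ∈ copiesSet I ((v k).mult I) ∧ q ∉ sA v σ k I := by
      by_contra hcon
      push_neg at hcon
      exact hne (Set.Subset.antisymm (sA_subset v σ k I) hcon)
    obtain ⟨hq1, hq2⟩ := hqc
    have hq2' : q.2 < (v k).mult q.1 := by rwa [hq1]
    rw [hcoe]
    by_cases hImm : PImm v σ ⟨k, ⟨q, hq2'⟩⟩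
    · have hinv : ¬ (limbar v σ ⟨k, ⟨q, hq2'⟩⟩).IsValid := by
        intro hval
        exact hqn ⟨hq1, hq2', hImm, hval⟩
      have := invalid_len v σ hσ hImm hinv
      rwa [show (PtC.bar v ⟨k, ⟨q, hq2'⟩⟩) = I from hq1] at this
    · have := mortal_len v σ hσ hImm
      rwa [show (PtC.bar v ⟨k, ⟨q, hq2'⟩⟩) = I from hq1] at this
  · -- column deletion
    intro B hlt
    by_cases hB : B.IsValid
    · rw [hcoe]
      by_contra hcon
      push_neg at hcon
      have hthr : ((4 * (1/2 : ℝ)^k : ℝ) : EReal) < B.len := hcon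
      have hsum : (∑ᶠ I, (sA v σ k I ∩ fbar v σ k ⁻¹' {B}).ncard)
          = (tB v σ k B).ncard := by
        rw [← ncard_fiber_finsum (tB_finite v σ hσ hv hB) (fun q : Bar × ℕ => q.1)]
        exact finsum_congr fun I => by rw [sA_fiber_eq_tB v σ hB I]
      rw [hsum, tB_ncard v σ hσ] at hlt
      rw [show (Lbc v σ).mult B = Lmult v σ B from rfl,
        Lmult_eq v σ hσ hv hB hthr] at hlt
      exact lt_irrefl _ hlt
    · exfalso
      have : (Lbc v σ).mult B = 0 := by
        show Lmult v σ B = 0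
        rw [Lmult, dif_neg]
        intro hc
        exact hB hc.1
      rw [this] at hlt
      exact Nat.not_lt_zero _ hlt
  · -- closeness
    intro I B hm
    obtain ⟨q, hq⟩ := Set.nonempty_of_ncard_ne_zero hm
    rw [mem_sA_fiber] at hq
    obtain ⟨h1, h, hImm, _, hlim⟩ := hq
    have := limbar_close v σ hσ hImm
    rwa [show (PtC.bar v ⟨k, ⟨q, h⟩⟩) = I from h1, hlim] at this

end Part5g
/-- The space of q-tame barcodes modulo overall shift, with the quotient
distance, is complete: every sequence of q-tame barcodes that is Cauchy for the quotient
distance converges, for the quotient distance, to some q-tame barcode. -/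
theorem qdist_complete (u : ℕ → Barcode) (hu : ∀ n, (u n).QTame)
    (hcauchy : ∀ ε : ℝ, 0 < ε → ∃ N : ℕ, ∀ m n : ℕ, N ≤ m → N ≤ n →
      Barcode.qdist (u m) (u n) < (ε : EReal)) :
    ∃ L : Barcode, L.QTame ∧ ∀ ε : ℝ, 0 < ε → ∃ N : ℕ, ∀ n : ℕ, N ≤ n →
      Barcode.qdist (u n) L < (ε : EReal) := by
  classical
  -- choose control indices
  have hM : ∀ k : ℕ, ∃ N : ℕ, ∀ m n : ℕ, N ≤ m → N ≤ n →
      Barcode.qdist (u m) (u n) < (((1/2 : ℝ)^k : ℝ) : EReal) :=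
    fun k => hcauchy _ (by positivity)
  choose M hMspec using hM
  -- a monotone subsequence
  let nseq : ℕ → ℕ := fun k => Nat.rec (M 0) (fun k ih => max ih (M (k+1))) k
  have hnseq_succ : ∀ k, nseq (k+1) = max (nseq k) (M (k+1)) := fun k => rfl
  have hnseq_ge : ∀ k, M k ≤ nseq k := by
    intro k
    cases k with
    | zero => exact le_rfl
    | succ k => rw [hnseq_succ]; exact le_max_right _ _
  have hnseq_mono : ∀ k, nseq k ≤ nseq (k+1) := by
    intro k
    rw [hnseq_succ]
    exact le_max_left _ _
  have hstep : ∀ k, Barcode.qdist (u (nseq k)) (u (nseq (k+1)))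
      < (((1/2 : ℝ)^k : ℝ) : EReal) := by
    intro k
    exact hMspec k _ _ (hnseq_ge k) ((hnseq_ge k).trans (hnseq_mono k))
  -- matchings along the subsequence, with shifts
  have hmatchex : ∀ k, ∃ c δ : ℝ, 0 ≤ δ ∧ δ < (1/2 : ℝ)^k ∧
      Barcode.HasMatching (u (nseq k)) ((u (nseq (k+1))).shift c) δ :=
    fun k => Barcode.exists_matching_of_qdist_lt (hstep k)
  choose c δ hδ0 hδlt hmatch using hmatchex
  -- cumulative shifts
  let e : ℕ → ℝ := fun k => Nat.rec 0 (fun k ih => c k + ih) k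
  have he_succ : ∀ k, e (k+1) = c k + e k := fun k => rfl
  let w : ℕ → Barcode := fun k => (u (nseq k)).shift (e k)
  have hwq : ∀ k, (w k).QTame := fun k => (hu (nseq k)).shift (e k)
  have hw : ∀ k, Barcode.HasMatching (w k) (w (k+1)) ((1/2 : ℝ)^k) := by
    intro k
    have h1 : Barcode.HasMatching (u (nseq k)) ((u (nseq (k+1))).shift (c k)) ((1/2)^k) :=
      (hmatch k).mono (le_of_lt (hδlt k))
    have h2 := h1.shift (e k)
    rwa [Barcode.shift_shift, ← he_succ k] at h2
  -- realize as copy matchings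
  choose σs hσs using fun k => exists_copyMatching_of_hasMatching (hw k)
  -- the limit barcode
  refine ⟨Lbc w σs, Lbc_qtame w σs hσs hwq, ?_⟩
  intro ε hε
  obtain ⟨k₀, hk₀⟩ := exists_pow_lt_of_lt_one (by positivity : (0:ℝ) < ε/4)
    (by norm_num : (1/2 : ℝ) < 1)
  refine ⟨nseq k₀, ?_⟩
  intro n hn
  -- distance from `u (nseq k₀)` to the limit
  have hmatchL : Barcode.HasMatching (w k₀) (Lbc w σs) (2 * (1/2 : ℝ)^k₀) :=
    matching_to_Lbc w σs hσs hwq k₀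
  have hmatchL' : Barcode.HasMatching (u (nseq k₀)) ((Lbc w σs).shift (-(e k₀)))
      (2 * (1/2 : ℝ)^k₀) := by
    have h2 := hmatchL.shift (-(e k₀))
    rwa [show (w k₀).shift (-(e k₀)) = ((u (nseq k₀)).shift (e k₀)).shift (-(e k₀)) from rfl,
      Barcode.shift_shift, add_neg_cancel, Barcode.shift_zero] at h2
  have hqL : Barcode.qdist (u (nseq k₀)) (Lbc w σs) < ((ε/2 : ℝ) : EReal) :=
    Barcode.qdist_lt_of_matching (by positivity) (by linarith) hmatchL'
  have hqn : Barcode.qdist (u n) (u (nseq k₀)) < (((1/2 : ℝ)^k₀ : ℝ) : EReal) :=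
    hMspec k₀ n (nseq k₀) ((hnseq_ge k₀).trans hn) (hnseq_ge k₀)
  have := Barcode.qdist_lt_add hqn hqL
  refine lt_of_lt_of_le this ?_
  rw [EReal.coe_le_coe_iff]
  linarith
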